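/- arXiv:2004.04274 — 6 statements merged into one kernel-verified Lean document; each statement's English description precedes it below -/
import Mathlib

section
/- Let E be a complex normed vector space, let L ≥ 1 be an integer, and let λ ∈ ℂ satisfy λ^L = −1. Let (δ_k)_{k≥0} be a sequence in E and D, E' ≥ 0 be such that ‖δ_k‖ ≤ D for all k, and ‖δ_k − δ_{k−L}‖ ≤ E' for all k ≥ L. Then for every n ≥ 0, ‖∑_{k=0}^{n} λ^{n−k} δ_k‖ ≤ L·D + (n+1)·E'. (Consequently, if n·h ≤ T, D = c·h^{ν} and E' = c·h^{ν+1}, the sum is of size O(h^{ν}).) -/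
/-- **Accumulation of errors, root-of-−1 eigenvalue case.**
Let `E` be a complex normed vector space, `L ≥ 1` an integer and `λ ∈ ℂ` with `λ ^ L = -1`.
If `‖δ k‖ ≤ D` for all `k` and `‖δ k - δ (k - L)‖ ≤ E'` for all `k ≥ L`, then for every `n`,
`‖∑_{k=0}^{n} λ^(n-k) • δ k‖ ≤ L * D + (n + 1) * E'`. -/
theorem accumulation_root_of_neg_one
    {E : Type*} [NormedAddCommGroup E] [NormedSpace ℂ E]
    (L : ℕ) (hL : 1 ≤ L) (lam : ℂ) (hlam : lam ^ L = -1)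
    (δ : ℕ → E) (D E' : ℝ) (hD : 0 ≤ D) (hE' : 0 ≤ E')
    (hδ : ∀ k, ‖δ k‖ ≤ D)
    (hdiff : ∀ k, L ≤ k → ‖δ k - δ (k - L)‖ ≤ E') :
    ∀ n : ℕ, ‖∑ k ∈ Finset.range (n + 1), lam ^ (n - k) • δ k‖
      ≤ (L : ℝ) * D + (n + 1 : ℝ) * E' := by
  -- |lam| = 1
  have hnorm : ‖lam‖ = 1 := by
    have h1 : ‖lam‖ ^ L = 1 := by rw [← norm_pow, hlam]; simp
    rcases lt_trichotomy ‖lam‖ 1 with h | h | h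
    · have := pow_lt_one₀ (norm_nonneg lam) h (show L ≠ 0 by omega)
      linarith
    · exact h
    · have := one_lt_pow₀ h (show L ≠ 0 by omega)
      linarith
  have termnorm : ∀ (j : ℕ) (x : E), ‖lam ^ j • x‖ = ‖x‖ := by
    intro j x
    rw [norm_smul, norm_pow, hnorm, one_pow, one_mul]
  -- reversed sum
  have hrev : ∀ n : ℕ, ∑ k ∈ Finset.range (n + 1), lam ^ (n - k) • δ k
      = ∑ j ∈ Finset.range (n + 1), lam ^ j • δ (n - j) := by
    intro n
    rw [← Finset.sum_range_reflect (fun j => lam ^ j • δ (n - j)) (n + 1)]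
    refine Finset.sum_congr rfl fun k hk => ?_
    simp only [Finset.mem_range] at hk
    have h1 : n + 1 - 1 - k = n - k := by omega
    have h2 : n - (n - k) = k := by omega
    rw [h1, h2]
  set R : ℕ → E := fun n => ∑ j ∈ Finset.range (n + 1), lam ^ j • δ (n - j) with hR
  -- one-step recursion
  have stepA : ∀ m : ℕ, R (m + L)
      = (∑ j ∈ Finset.range L, lam ^ j • δ (m + L - j)) - R m := by
    intro m
    have hsplit : ∑ j ∈ Finset.range (L + (m + 1)), lam ^ j • δ (m + L - j)
        = (∑ j ∈ Finset.range L, lam ^ j • δ (m + L - j))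
          + ∑ i ∈ Finset.range (m + 1), lam ^ (L + i) • δ (m + L - (L + i)) :=
      Finset.sum_range_add _ L (m + 1)
    have hcount : m + L + 1 = L + (m + 1) := by omega
    have hsecond : ∑ i ∈ Finset.range (m + 1), lam ^ (L + i) • δ (m + L - (L + i))
        = - R m := by
      rw [hR, ← Finset.sum_neg_distrib]
      refine Finset.sum_congr rfl fun i hi => ?_
      have harg : m + L - (L + i) = m - i := by omega
      rw [harg, pow_add, hlam, neg_one_mul, neg_smul]
    rw [hR]
    simp only []
    rw [hcount, hsplit, hsecond, sub_eq_add_neg]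
  -- main bound by strong induction
  have key : ∀ n : ℕ, ‖R n‖ ≤ (L : ℝ) * D + (n + 1 : ℝ) * E' := by
    intro n
    induction n using Nat.strong_induction_on with
    | _ n ih =>
      rcases lt_or_ge n L with hnL | hnL
      · -- trivial case
        have : ‖R n‖ ≤ (n + 1 : ℝ) * D := by
          calc ‖R n‖ ≤ ∑ j ∈ Finset.range (n + 1), ‖lam ^ j • δ (n - j)‖ :=
                norm_sum_le _ _
            _ ≤ ∑ j ∈ Finset.range (n + 1), D :=
                Finset.sum_le_sum fun j _ => by rw [termnorm]; exact hδ _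
            _ = (n + 1 : ℝ) * D := by
                rw [Finset.sum_const, Finset.card_range, nsmul_eq_mul]; push_cast; ring
        have h1 : (n + 1 : ℝ) ≤ (L : ℝ) := by exact_mod_cast hnL
        nlinarith [mul_nonneg (show (0:ℝ) ≤ (n:ℝ) + 1 by positivity) hE']
      rcases lt_or_ge n (2 * L) with hn2L | hn2L
      · -- middle case : L ≤ n < 2L, pair directly
        obtain ⟨m, rfl⟩ : ∃ m, n = m + L := ⟨n - L, by omega⟩
        have hmL : m + 1 ≤ L := by omega
        have hsplitT : ∑ j ∈ Finset.range L, lam ^ j • δ (m + L - j)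
            = (∑ j ∈ Finset.range (m + 1), lam ^ j • δ (m + L - j))
              + ∑ i ∈ Finset.range (L - (m + 1)), lam ^ (m + 1 + i) • δ (m + L - (m + 1 + i)) := by
          rw [← Finset.sum_range_add _ (m + 1) (L - (m + 1)),
            show m + 1 + (L - (m + 1)) = L by omega]
        have hid : R (m + L)
            = (∑ j ∈ Finset.range (m + 1), lam ^ j • (δ (m + L - j) - δ (m - j)))
              + ∑ i ∈ Finset.range (L - (m + 1)), lam ^ (m + 1 + i) • δ (m + L - (m + 1 + i)) := by
          rw [stepA m, hsplitT, hR]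
          simp only [smul_sub, Finset.sum_sub_distrib]
          abel
        rw [hid]
        have b1 : ‖∑ j ∈ Finset.range (m + 1), lam ^ j • (δ (m + L - j) - δ (m - j))‖
            ≤ (m + 1 : ℝ) * E' := by
          calc _ ≤ ∑ j ∈ Finset.range (m + 1), ‖lam ^ j • (δ (m + L - j) - δ (m - j))‖ :=
                norm_sum_le _ _
            _ ≤ ∑ j ∈ Finset.range (m + 1), E' := Finset.sum_le_sum fun j hj => by
                simp only [Finset.mem_range] at hj
                rw [termnorm]
                have h1 : m - j = (m + L - j) - L := by omega
                rw [h1]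
                exact hdiff _ (by omega)
            _ = (m + 1 : ℝ) * E' := by
                rw [Finset.sum_const, Finset.card_range, nsmul_eq_mul]; push_cast; ring
        have b2 : ‖∑ i ∈ Finset.range (L - (m + 1)), lam ^ (m + 1 + i) • δ (m + L - (m + 1 + i))‖
            ≤ ((L - (m + 1) : ℕ) : ℝ) * D := by
          calc _ ≤ ∑ i ∈ Finset.range (L - (m + 1)), ‖lam ^ (m + 1 + i) • δ (m + L - (m + 1 + i))‖ :=
                norm_sum_le _ _
            _ ≤ ∑ i ∈ Finset.range (L - (m + 1)), D := Finset.sum_le_sum fun i _ => by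
                rw [termnorm]; exact hδ _
            _ = ((L - (m + 1) : ℕ) : ℝ) * D := by
                rw [Finset.sum_const, Finset.card_range, nsmul_eq_mul]
        have hc : ((L - (m + 1) : ℕ) : ℝ) ≤ (L : ℝ) := by
          have : (L - (m + 1) : ℕ) ≤ L := by omega
          exact_mod_cast this
        have hb : (1:ℝ) ≤ (L:ℝ) := by exact_mod_cast hL
        calc ‖_ + _‖ ≤ _ + _ := norm_add_le _ _
          _ ≤ (m + 1 : ℝ) * E' + ((L - (m + 1) : ℕ) : ℝ) * D := by gcongr
          _ ≤ (L : ℝ) * D + ((m + L : ℕ) + 1 : ℝ) * E' := by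
              push_cast
              nlinarith [mul_nonneg hD (show (0:ℝ) ≤ 1 by norm_num)]
      · -- big case : n ≥ 2L, two-step telescoping
        obtain ⟨m, rfl⟩ : ∃ m, n = m + L + L := ⟨n - 2 * L, by omega⟩
        have hid : R (m + L + L)
            = (∑ j ∈ Finset.range L, lam ^ j • (δ (m + L + L - j) - δ (m + L - j))) + R m := by
          rw [stepA (m + L), stepA m]
          simp only [smul_sub, Finset.sum_sub_distrib]
          abel
        rw [hid]
        have b1 : ‖∑ j ∈ Finset.range L, lam ^ j • (δ (m + L + L - j) - δ (m + L - j))‖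
            ≤ (L : ℝ) * E' := by
          calc _ ≤ ∑ j ∈ Finset.range L, ‖lam ^ j • (δ (m + L + L - j) - δ (m + L - j))‖ :=
                norm_sum_le _ _
            _ ≤ ∑ j ∈ Finset.range L, E' := Finset.sum_le_sum fun j hj => by
                simp only [Finset.mem_range] at hj
                rw [termnorm]
                have h1 : m + L - j = (m + L + L - j) - L := by omega
                rw [h1]
                exact hdiff _ (by omega)
            _ = (L : ℝ) * E' := by
                rw [Finset.sum_const, Finset.card_range, nsmul_eq_mul]
        have b2 := ih m (by omega)
        calc ‖_ + _‖ ≤ _ + _ := norm_add_le _ _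
          _ ≤ (L : ℝ) * E' + ((L : ℝ) * D + (m + 1 : ℝ) * E') := by gcongr
          _ ≤ (L : ℝ) * D + ((m + L + L : ℕ) + 1 : ℝ) * E' := by
              push_cast
              nlinarith [mul_nonneg (show (0:ℝ) ≤ (L:ℝ) by positivity) hE']
  intro n
  rw [hrev n]
  exact key n
end

section
/- Let A be an s×s complex matrix that is diagonalizable with all eigenvalues real and strictly positive (i.e., A = P D P⁻¹ with P invertible and D diagonal with positive real diagonal entries), and let J be an m×m complex matrix that is diagonalizable with all eigenvalues having nonpositive real part (J = Q Λ Q⁻¹ with Λ diagonal and Re Λ_{jj} ≤ 0). Then there exists a constant C, independent of h, such that for every h ≥ 0 the matrix S := I_{sm} − h·(A ⊗ J) is invertible and ‖S⁻¹‖ ≤ C, where ⊗ denotes the Kronecker product and ‖·‖ the L²-operator norm. -/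
open scoped Matrix.Norms.L2Operator Kronecker

open Matrix

/-- The L² operator norm of a diagonal matrix whose entries are bounded by `c ≥ 0` is
bounded by `c`. -/
lemma l2_opNorm_diagonal_le {n : Type*} [Fintype n] [DecidableEq n]
    (v : n → ℂ) (c : ℝ) (hc : 0 ≤ c) (hv : ∀ i, ‖v i‖ ≤ c) :
    ‖Matrix.diagonal v‖ ≤ c := by
  rw [Matrix.l2_opNorm_def]
  refine ContinuousLinearMap.opNorm_le_bound _ hc fun x => ?_
  have hy : ∀ i, (Matrix.toEuclideanLin (Matrix.diagonal v) x) i = v i * x i := by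
    intro i
    rw [Matrix.toEuclideanLin_apply]
    simp [Matrix.mulVec_diagonal]
  show ‖Matrix.toEuclideanLin (Matrix.diagonal v) x‖ ≤ c * ‖x‖
  calc ‖Matrix.toEuclideanLin (Matrix.diagonal v) x‖
      = Real.sqrt (∑ i, ‖v i * x i‖ ^ 2) := by
        rw [EuclideanSpace.norm_eq]
        congr 1
        exact Finset.sum_congr rfl fun i _ => by rw [hy i]
    _ ≤ Real.sqrt (∑ i, c ^ 2 * ‖x i‖ ^ 2) := by
        apply Real.sqrt_le_sqrt
        refine Finset.sum_le_sum fun i _ => ?_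
        rw [norm_mul, mul_pow]
        gcongr
        exact hv i
    _ = c * ‖x‖ := by
        rw [← Finset.mul_sum, Real.sqrt_mul (by positivity), Real.sqrt_sq hc,
          EuclideanSpace.norm_eq]

/-- **Uniform resolvent bound for `I − h (A ⊗ J)`.**
If `A = P D P⁻¹` is diagonalizable with strictly positive real eigenvalues and
`J = Q Λ Q⁻¹` is diagonalizable with eigenvalues of nonpositive real part, then there is a
constant `C`, independent of `h`, such that for every `h ≥ 0` the matrix
`S = I − h (A ⊗ J)` is invertible with `‖S⁻¹‖ ≤ C` (L²-operator norm). -/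
theorem uniform_resolvent_bound_kronecker
    {s m : ℕ}
    (A P : Matrix (Fin s) (Fin s) ℂ) (hP : IsUnit P)
    (d : Fin s → ℝ) (hd : ∀ i, 0 < d i)
    (hA : A = P * Matrix.diagonal (fun i => (d i : ℂ)) * P⁻¹)
    (J Q : Matrix (Fin m) (Fin m) ℂ) (hQ : IsUnit Q)
    (μ : Fin m → ℂ) (hμ : ∀ j, (μ j).re ≤ 0)
    (hJ : J = Q * Matrix.diagonal μ * Q⁻¹) :
    ∃ C : ℝ, ∀ h : ℝ, 0 ≤ h →
      IsUnit ((1 : Matrix (Fin s × Fin m) (Fin s × Fin m) ℂ) - (h : ℂ) • (A ⊗ₖ J)) ∧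
      ‖((1 : Matrix (Fin s × Fin m) (Fin s × Fin m) ℂ) - (h : ℂ) • (A ⊗ₖ J))⁻¹‖ ≤ C := by
  classical
  set U : Matrix (Fin s × Fin m) (Fin s × Fin m) ℂ := P ⊗ₖ Q with hUdef
  have hPdet : IsUnit P.det := (Matrix.isUnit_iff_isUnit_det P).mp hP
  have hQdet : IsUnit Q.det := (Matrix.isUnit_iff_isUnit_det Q).mp hQ
  have hUdet : IsUnit U.det := by
    rw [hUdef, Matrix.det_kronecker]
    exact (hPdet.pow _).mul (hQdet.pow _)
  have hU : IsUnit U := (Matrix.isUnit_iff_isUnit_det U).mpr hUdet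
  refine ⟨‖U‖ * ‖U⁻¹‖, fun h hh => ?_⟩
  -- the diagonal entries of the transformed matrix
  set w : Fin s × Fin m → ℂ := fun p => 1 - (h : ℂ) * ((d p.1 : ℂ) * μ p.2) with hwdef
  have hw1 : ∀ p, (1 : ℝ) ≤ ‖w p‖ := by
    intro p
    set r : ℝ := h * d p.1 with hr
    have hr0 : 0 ≤ r := mul_nonneg hh (hd p.1).le
    have hre : (w p).re = 1 - r * (μ p.2).re := by
      simp [hwdef, hr, Complex.mul_re, Complex.mul_im, mul_assoc]
    have him : (w p).im = -(r * (μ p.2).im) := by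
      simp [hwdef, hr, Complex.mul_re, Complex.mul_im, mul_assoc]
    have hns : (1 : ℝ) ≤ Complex.normSq (w p) := by
      rw [Complex.normSq_apply, hre, him]
      have h1 : r * (μ p.2).re ≤ 0 := mul_nonpos_of_nonneg_of_nonpos hr0 (hμ p.2)
      nlinarith [sq_nonneg (r * (μ p.2).im), sq_nonneg (r * (μ p.2).re)]
    calc (1 : ℝ) = Real.sqrt 1 := (Real.sqrt_one).symm
      _ ≤ Real.sqrt (Complex.normSq (w p)) := Real.sqrt_le_sqrt hns
      _ = ‖w p‖ := by rw [Complex.norm_def]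
  have hw0 : ∀ p, w p ≠ 0 := fun p hp => by
    have := hw1 p; rw [hp, norm_zero] at this; linarith
  set T : Matrix (Fin s × Fin m) (Fin s × Fin m) ℂ := Matrix.diagonal w with hTdef
  have hT : IsUnit T := by
    rw [hTdef, Matrix.isUnit_diagonal]
    exact IsUnit.of_mul_eq_one (a := w) (fun p => (w p)⁻¹)
      (funext fun p => mul_inv_cancel₀ (hw0 p))
  have hTdet : IsUnit T.det := (Matrix.isUnit_iff_isUnit_det T).mp hT
  -- the factorization S = U * T * U⁻¹
  have hdiag : (1 : Matrix (Fin s × Fin m) (Fin s × Fin m) ℂ) -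
      (h : ℂ) • ((Matrix.diagonal (fun i => (d i : ℂ))) ⊗ₖ (Matrix.diagonal μ)) = T := by
    rw [Matrix.diagonal_kronecker_diagonal, hTdef]
    ext p q
    rcases eq_or_ne p q with rfl | hpq
    · simp [hwdef, Matrix.diagonal_apply_eq, Matrix.one_apply_eq]
    · simp [Matrix.diagonal_apply_ne _ hpq, Matrix.one_apply_ne hpq]
  have hAJ : A ⊗ₖ J = U * ((Matrix.diagonal (fun i => (d i : ℂ))) ⊗ₖ (Matrix.diagonal μ)) * U⁻¹ := by
    rw [hA, hJ, mul_kronecker_mul, mul_kronecker_mul, hUdef, Matrix.inv_kronecker]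
  have hfact : (1 : Matrix (Fin s × Fin m) (Fin s × Fin m) ℂ) - (h : ℂ) • (A ⊗ₖ J)
      = U * T * U⁻¹ := by
    rw [hAJ, ← hdiag, Matrix.mul_sub, Matrix.sub_mul, Matrix.mul_one,
      Matrix.mul_nonsing_inv U hUdet, Matrix.mul_smul, Matrix.smul_mul]
  have hUinv : IsUnit U⁻¹ := Matrix.isUnit_nonsing_inv_iff.mpr hU
  constructor
  · rw [hfact]
    exact (hU.mul hT).mul hUinv
  · have hinv : ((1 : Matrix (Fin s × Fin m) (Fin s × Fin m) ℂ) - (h : ℂ) • (A ⊗ₖ J))⁻¹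
        = U * T⁻¹ * U⁻¹ := by
      rw [hfact]
      apply Matrix.inv_eq_right_inv
      simp only [Matrix.mul_assoc]
      rw [Matrix.nonsing_inv_mul_cancel_left _ _ hUdet,
        Matrix.mul_nonsing_inv_cancel_left _ _ hTdet,
        Matrix.mul_nonsing_inv _ hUdet]
    rw [hinv]
    have hTinv_eq : T⁻¹ = Matrix.diagonal (fun p => (w p)⁻¹) := by
      apply Matrix.inv_eq_right_inv
      rw [hTdef, Matrix.diagonal_mul_diagonal]
      have hww : (fun p => w p * (w p)⁻¹) = fun _ => (1 : ℂ) :=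
        funext fun p => mul_inv_cancel₀ (hw0 p)
      rw [hww, Matrix.diagonal_one]
    have hTinv : ‖T⁻¹‖ ≤ 1 := by
      rw [hTinv_eq]
      refine l2_opNorm_diagonal_le _ 1 zero_le_one fun p => ?_
      rw [norm_inv]
      exact inv_le_one_of_one_le₀ (hw1 p)
    calc ‖U * T⁻¹ * U⁻¹‖ ≤ ‖U * T⁻¹‖ * ‖U⁻¹‖ := Matrix.l2_opNorm_mul _ _
      _ ≤ (‖U‖ * ‖T⁻¹‖) * ‖U⁻¹‖ := by
          gcongr
          exact Matrix.l2_opNorm_mul _ _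
      _ ≤ (‖U‖ * 1) * ‖U⁻¹‖ := by gcongr
      _ = ‖U‖ * ‖U⁻¹‖ := by ring
end

section
/- Let c ∈ ℝ^s, let w_0, w_1, …, w_q ∈ ℝ^r, and let A ∈ ℝ^{s×s} be invertible, U ∈ ℝ^{s×r}, B ∈ ℝ^{r×s}, V ∈ ℝ^{r×r}. Assume the preconsistency conditions U w_0 = 𝟙_s (the all-ones vector) and V w_0 = w_0, and assume that for every k = 1, …, q the stage-order condition c^{∘k}/k! − A·c^{∘(k−1)}/(k−1)! − U w_k = 0 and the order condition ∑_{ℓ=0}^{k} w_{k−ℓ}/ℓ! − B·c^{∘(k−1)}/(k−1)! − V w_k = 0 hold, where c^{∘k} denotes the componentwise k-th power of c (with c^{∘0} = 𝟙_s). Define M_∞ := V − B A⁻¹ U. Then for every k = 0, 1, …, q: ∑_{ℓ=0}^{k} w_{k−ℓ}/ℓ! − B A⁻¹ c^{∘k}/k! = M_∞ w_k. (For k = 0 this reads w_0 − B A⁻¹ 𝟙_s = M_∞ w_0.) -/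
/-- **Derived order-condition identities for the stability matrix at infinity.**
Given GLM coefficients `(A, U, B, V)` with `A` invertible, abscissae `c`, and Nordsieck weights
`w_0, …, w_q` satisfying preconsistency and the order/stage-order conditions up to `q`, one has
for every `k = 0, …, q`:
`∑_{ℓ=0}^{k} w_{k−ℓ}/ℓ! − B A⁻¹ c^{∘k}/k! = (V − B A⁻¹ U) w_k`. -/
theorem glm_order_conditions_infinity_identity
    {s r : ℕ} (q : ℕ)
    (c : Fin s → ℝ) (w : ℕ → Fin r → ℝ)
    (A : Matrix (Fin s) (Fin s) ℝ) (hA : IsUnit A.det)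
    (U : Matrix (Fin s) (Fin r) ℝ) (B : Matrix (Fin r) (Fin s) ℝ)
    (V : Matrix (Fin r) (Fin r) ℝ)
    (hpre1 : U.mulVec (w 0) = fun _ => 1)
    (hpre2 : V.mulVec (w 0) = w 0)
    (hstage : ∀ k, 1 ≤ k → k ≤ q →
      (fun i => c i ^ k / (Nat.factorial k : ℝ))
        - A.mulVec (fun i => c i ^ (k - 1) / (Nat.factorial (k - 1) : ℝ))
        - U.mulVec (w k) = 0)
    (horder : ∀ k, 1 ≤ k → k ≤ q →
      (∑ ℓ ∈ Finset.range (k + 1), (1 / (Nat.factorial ℓ : ℝ)) • w (k - ℓ))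
        - B.mulVec (fun i => c i ^ (k - 1) / (Nat.factorial (k - 1) : ℝ))
        - V.mulVec (w k) = 0) :
    ∀ k, k ≤ q →
      (∑ ℓ ∈ Finset.range (k + 1), (1 / (Nat.factorial ℓ : ℝ)) • w (k - ℓ))
        - (B * A⁻¹).mulVec (fun i => c i ^ k / (Nat.factorial k : ℝ))
      = (V - B * A⁻¹ * U).mulVec (w k) := by
  have hinv : A⁻¹ * A = 1 := Matrix.nonsing_inv_mul A hA
  intro k hk
  rcases Nat.eq_zero_or_pos k with rfl | hk1
  · have h1 : (fun i : Fin s => c i ^ 0 / (Nat.factorial 0 : ℝ)) = U.mulVec (w 0) := by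
      rw [hpre1]; funext i; simp
    rw [h1, Matrix.mulVec_mulVec, Matrix.sub_mulVec, hpre2, Finset.sum_range_one]
    simp
  · have hs := hstage k hk1 hk
    have ho := horder k hk1 hk
    have hU : U.mulVec (w k) =
        (fun i => c i ^ k / (Nat.factorial k : ℝ))
          - A.mulVec (fun i => c i ^ (k - 1) / (Nat.factorial (k - 1) : ℝ)) :=
      (sub_eq_zero.mp hs).symm
    have hV : V.mulVec (w k) =
        (∑ ℓ ∈ Finset.range (k + 1), (1 / (Nat.factorial ℓ : ℝ)) • w (k - ℓ))
          - B.mulVec (fun i => c i ^ (k - 1) / (Nat.factorial (k - 1) : ℝ)) :=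
      (sub_eq_zero.mp ho).symm
    have hBA : B * A⁻¹ * A = B := by rw [Matrix.mul_assoc, hinv, Matrix.mul_one]
    rw [Matrix.sub_mulVec, hV, ← Matrix.mulVec_mulVec (w k) (B * A⁻¹) U, hU,
      Matrix.mulVec_sub, Matrix.mulVec_mulVec, hBA]
    abel
end

section
/- Let q ≥ 0 be an integer, m, r, s ≥ 1, and let w_0, …, w_q ∈ ℝ^r, c ∈ ℝ^s with components c_i ∈ [0,1], M_∞ ∈ ℝ^{r×r} and D ∈ ℝ^{r×s} be such that for all k = 0, …, q: ∑_{ℓ=0}^{k} w_{k−ℓ}/ℓ! − D·c^{∘k}/k! = M_∞ w_k, where c^{∘k} is the componentwise k-th power (c^{∘0} = 𝟙_s). Let z : ℝ → ℝ^m be (q+1)-times continuously differentiable on [t_0, t_F] with ‖z^{(q+1)}‖ bounded by a constant on [t_0, t_F]. Then there exists C > 0 such that for all h ∈ (0, t_F − t_0] and all t ∈ [t_0, t_F − h], the vector in (ℝ^m)^r whose i-th block is ∑_{k=0}^{q} (w_k)_i h^k z^{(k)}(t+h) − ∑_{j=1}^{r} (M_∞)_{ij} ∑_{k=0}^{q}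 (w_k)_j h^k z^{(k)}(t) − ∑_{j=1}^{s} D_{ij} z(t + c_j h) has Euclidean norm at most C·h^{q+1}. -/
open Set Finset

section AuxResidual
variable {E : Type*} [NormedAddCommGroup E] [NormedSpace ℝ E]

private lemma iterDeriv_iterDeriv_aux {f : ℝ → E} {s : Set ℝ} (hs : UniqueDiffOn ℝ s)
    (n : ℕ) : ∀ (ℓ : ℕ), ∀ y ∈ s,
    iteratedDerivWithin ℓ (iteratedDerivWithin n f s) s y = iteratedDerivWithin (n + ℓ) f s y := by
  intro ℓ
  induction ℓ with
  | zero => intro y hy; simp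
  | succ ℓ IH =>
    intro y hy
    rw [iteratedDerivWithin_succ,
      derivWithin_congr (fun x hx => IH x hx) (IH y hy),
      ← iteratedDerivWithin_succ, ← add_assoc]

private lemma iterDeriv_restrict_aux {f : ℝ → E} {a b t u : ℝ} {n : WithTop ℕ∞}
    (hf : ContDiffOn ℝ n f (Set.Icc a b)) (hta : a ≤ t) (htu : t < u) (hub : u ≤ b)
    {k : ℕ} (hk : (k : WithTop ℕ∞) ≤ n) {y : ℝ} (hy : y ∈ Set.Icc t u) :
    iteratedDerivWithin k f (Set.Icc t u) y = iteratedDerivWithin k f (Set.Icc a b) y := by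
  have hab : a < b := lt_of_le_of_lt hta (lt_of_lt_of_le htu hub)
  have H2 := (hf.ftaylorSeriesWithin (uniqueDiffOn_Icc hab)).mono (Set.Icc_subset_Icc hta hub)
  have e1 := H2.eq_iteratedFDerivWithin_of_uniqueDiffOn hk (uniqueDiffOn_Icc htu) hy
  rw [iteratedDerivWithin_eq_iteratedFDerivWithin, iteratedDerivWithin_eq_iteratedFDerivWithin,
    ← e1]
  rfl

private lemma contDiffOn_iterDeriv_aux {f : ℝ → E} {s : Set ℝ} (hs : UniqueDiffOn ℝ s)
    {n : WithTop ℕ∞} (hf : ContDiffOn ℝ n f s) {k : ℕ} {m : WithTop ℕ∞}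
    (h : m + k ≤ n) : ContDiffOn ℝ m (iteratedDerivWithin k f s) s := by
  have : iteratedDerivWithin k f s = fun x =>
      (ContinuousMultilinearMap.apply ℝ (fun _ : Fin k => ℝ) E (fun _ => 1))
        (iteratedFDerivWithin ℝ k f s x) := by
    funext x
    rw [iteratedDerivWithin_eq_iteratedFDerivWithin]
    rfl
  rw [this]
  intro x hx
  exact (ContinuousMultilinearMap.apply ℝ (fun _ : Fin k => ℝ) E
    (fun _ => 1)).contDiff.contDiffWithinAt.comp x
    ((hf x hx).iteratedFDerivWithin_right hs h hx) (Set.subset_preimage_univ)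

/-- Taylor remainder bound centered at an arbitrary point of `[a,b)`. -/
private lemma taylor_bound_aux {f : ℝ → E} {a b C : ℝ} {n : ℕ}
    (hf : ContDiffOn ℝ (n + 1) f (Set.Icc a b))
    (hC : ∀ y ∈ Set.Icc a b, ‖iteratedDerivWithin (n + 1) f (Set.Icc a b) y‖ ≤ C)
    {t x : ℝ} (hta : a ≤ t) (htb : t < b) (hx : x ∈ Set.Icc t b) :
    ‖f x - ∑ k ∈ Finset.range (n + 1),
        ((k.factorial : ℝ)⁻¹ * (x - t) ^ k) • iteratedDerivWithin k f (Set.Icc a b) t‖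
      ≤ C * (x - t) ^ (n + 1) / n.factorial := by
  have hsub : Set.Icc t b ⊆ Set.Icc a b := Set.Icc_subset_Icc hta le_rfl
  have hf' : ContDiffOn ℝ (n + 1) f (Set.Icc t b) := hf.mono hsub
  have hC' : ∀ y ∈ Set.Icc t b, ‖iteratedDerivWithin (n + 1) f (Set.Icc t b) y‖ ≤ C := by
    intro y hy
    rw [iterDeriv_restrict_aux (k := n + 1) hf hta htb le_rfl (by exact_mod_cast le_rfl) hy]
    exact hC y (hsub hy)
  have h1 := taylor_mean_remainder_bound htb.le hf' hx hC'
  rw [taylor_within_apply] at h1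
  have hsum : ∑ k ∈ Finset.range (n + 1),
      ((k.factorial : ℝ)⁻¹ * (x - t) ^ k) • iteratedDerivWithin k f (Set.Icc a b) t
      = ∑ k ∈ Finset.range (n + 1),
      ((k.factorial : ℝ)⁻¹ * (x - t) ^ k) • iteratedDerivWithin k f (Set.Icc t b) t := by
    refine Finset.sum_congr rfl fun k hk => ?_
    rw [iterDeriv_restrict_aux (k := k) hf hta htb le_rfl
      (by exact_mod_cast Nat.lt_succ_iff.1 (Finset.mem_range.1 hk) |>.trans (Nat.le_succ n))
      (Set.left_mem_Icc.2 htb.le)]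
  rw [hsum]
  exact h1

private lemma sum_range_diag_aux {M : Type*} [AddCommMonoid M] (N : ℕ) (f : ℕ → ℕ → M) :
    ∑ k ∈ Finset.range N, ∑ ℓ ∈ Finset.range (k + 1), f ℓ (k - ℓ)
      = ∑ n ∈ Finset.range N, ∑ ℓ ∈ Finset.range (N - n), f ℓ n := by
  rw [Finset.sum_sigma', Finset.sum_sigma']
  refine Finset.sum_nbij' (fun x => ⟨x.1 - x.2, x.2⟩) (fun x => ⟨x.1 + x.2, x.2⟩) ?_ ?_ ?_ ?_ ?_
  · rintro ⟨k, ℓ⟩ hkl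
    simp only [Finset.mem_sigma, Finset.mem_range] at hkl ⊢
    omega
  · rintro ⟨nn, ℓ⟩ hkl
    simp only [Finset.mem_sigma, Finset.mem_range] at hkl ⊢
    omega
  · rintro ⟨k, ℓ⟩ hkl
    simp only [Finset.mem_sigma, Finset.mem_range] at hkl
    simp only [Sigma.mk.inj_iff, heq_eq_eq]
    constructor
    · omega
    · trivial
  · rintro ⟨nn, ℓ⟩ hkl
    simp only [Finset.mem_sigma, Finset.mem_range] at hkl
    simp only [Sigma.mk.inj_iff, heq_eq_eq]
    constructor
    · omega
    · trivial
  · rintro ⟨k, ℓ⟩ hkl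
    rfl

private lemma pilp_norm_le_aux {ι : Type*} [Fintype ι] {β : ι → Type*}
    [∀ i, SeminormedAddCommGroup (β i)]
    (x : PiLp 2 β) {B : ℝ} (hB : 0 ≤ B) (h : ∀ i, ‖x i‖ ≤ B) :
    ‖x‖ ≤ Real.sqrt (Fintype.card ι) * B := by
  rw [PiLp.norm_eq_of_L2]
  rw [← Real.sqrt_sq hB, ← Real.sqrt_mul (by positivity)]
  apply Real.sqrt_le_sqrt
  calc ∑ i, ‖x i‖ ^ 2 ≤ ∑ _i : ι, B ^ 2 := by
        apply Finset.sum_le_sum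
        intro i _
        exact pow_le_pow_left₀ (norm_nonneg _) (h i) 2
    _ = (Fintype.card ι : ℝ) * B ^ 2 := by simp [Finset.sum_const, nsmul_eq_mul]

end AuxResidual

set_option maxHeartbeats 1000000 in
/-- **The exact smooth solution satisfies the stiff external-stage update up to `O(h^{q+1})`.**
If the vectors `w_0, …, w_q`, the abscissae `c ∈ [0,1]^s`, and matrices `M_∞`, `D` satisfy the
identities `∑_{ℓ=0}^{k} w_{k−ℓ}/ℓ! − D c^{∘k}/k! = M_∞ w_k` for `k = 0, …, q`, and
`z : ℝ → ℝ^m` is `(q+1)`-times continuously differentiable on `[t₀, t_F]` with bounded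
`(q+1)`-st derivative, then the residual of the external-stage update at the exact solution
is of size `C · h^{q+1}`, uniformly for `h ∈ (0, t_F − t₀]` and `t ∈ [t₀, t_F − h]`. -/
theorem external_stage_update_residual
    {m r s : ℕ} (hm : 1 ≤ m) (hr : 1 ≤ r) (hs : 1 ≤ s) (q : ℕ)
    (w : ℕ → Fin r → ℝ) (c : Fin s → ℝ) (hc : ∀ j, c j ∈ Set.Icc (0 : ℝ) 1)
    (Minf : Matrix (Fin r) (Fin r) ℝ) (D : Matrix (Fin r) (Fin s) ℝ)
    (hid : ∀ k, k ≤ q →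
      (∑ ℓ ∈ Finset.range (k + 1), (1 / (Nat.factorial ℓ : ℝ)) • w (k - ℓ))
        - D.mulVec (fun i => c i ^ k / (Nat.factorial k : ℝ))
      = Minf.mulVec (w k))
    (t₀ tF : ℝ) (ht : t₀ < tF)
    (z : ℝ → EuclideanSpace ℝ (Fin m))
    (hz : ContDiffOn ℝ (q + 1) z (Set.Icc t₀ tF))
    (Cz : ℝ)
    (hzbound : ∀ t ∈ Set.Icc t₀ tF,
      ‖iteratedDerivWithin (q + 1) z (Set.Icc t₀ tF) t‖ ≤ Cz) :
    ∃ C > 0, ∀ h ∈ Set.Ioc (0 : ℝ) (tF - t₀), ∀ t ∈ Set.Icc t₀ (tF - h),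
      ‖(WithLp.equiv 2 (Fin r → EuclideanSpace ℝ (Fin m))).symm
          (fun i =>
            (∑ k ∈ Finset.range (q + 1),
              (w k i * h ^ k) • iteratedDerivWithin k z (Set.Icc t₀ tF) (t + h))
            - ∑ j : Fin r, Minf i j •
                (∑ k ∈ Finset.range (q + 1),
                  (w k j * h ^ k) • iteratedDerivWithin k z (Set.Icc t₀ tF) t)
            - ∑ j : Fin s, D i j • z (t + c j * h))‖
        ≤ C * h ^ (q + 1) := by
  have hI : UniqueDiffOn ℝ (Set.Icc t₀ tF) := uniqueDiffOn_Icc ht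
  have hCz0 : 0 ≤ Cz := le_trans (norm_nonneg _) (hzbound t₀ (Set.left_mem_Icc.2 ht.le))
  set W : ℝ := (∑ n ∈ Finset.range (q + 1), ∑ i : Fin r, |w n i|)
      + ∑ i : Fin r, ∑ j : Fin s, |D i j| with hW
  have hW0 : 0 ≤ W := by positivity
  set B₀ : ℝ := Cz * W + 1 with hB₀
  have hB₀pos : 0 < B₀ := by positivity
  refine ⟨Real.sqrt r * B₀, by
    have : (0:ℝ) < Real.sqrt r := Real.sqrt_pos.2 (by exact_mod_cast Nat.lt_of_lt_of_le Nat.zero_lt_one hr)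
    positivity, ?_⟩
  intro h hh t htt
  obtain ⟨hh0, hhT⟩ := hh
  obtain ⟨ht1, ht2⟩ := htt
  have htb : t < tF := lt_of_le_of_lt ht2 (by linarith)
  have hth : t + h ≤ tF := by linarith
  have tmem : t ∈ Set.Icc t₀ tF := ⟨ht1, htb.le⟩
  -- scalar order conditions at component i
  have hidk : ∀ (i : Fin r) (k : ℕ), k ≤ q →
      (∑ ℓ ∈ Finset.range (k + 1), ((ℓ.factorial : ℝ))⁻¹ * w (k - ℓ) i)
        - ∑ j : Fin s, D i j * (c j ^ k / (k.factorial : ℝ))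
      = ∑ j : Fin r, Minf i j * w k j := by
    intro i k hk
    have := congrFun (hid k hk) i
    simpa [Matrix.mulVec, dotProduct, one_div] using this
  -- Taylor bound for the stage values
  have keyc : ∀ j : Fin s,
      ‖z (t + c j * h) - ∑ k ∈ Finset.range (q + 1),
          ((k.factorial : ℝ)⁻¹ * (c j * h) ^ k) • iteratedDerivWithin k z (Set.Icc t₀ tF) t‖
        ≤ Cz * h ^ (q + 1) := by
    intro j
    obtain ⟨hc0, hc1⟩ := hc j
    have hx : t + c j * h ∈ Set.Icc t tF := by
      constructor
      · nlinarith
      · nlinarith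
    have h1 := taylor_bound_aux hz hzbound ht1 htb hx
    have e : t + c j * h - t = c j * h := by ring
    rw [e] at h1
    calc ‖z (t + c j * h) - ∑ k ∈ Finset.range (q + 1),
          ((k.factorial : ℝ)⁻¹ * (c j * h) ^ k) • iteratedDerivWithin k z (Set.Icc t₀ tF) t‖
        ≤ Cz * (c j * h) ^ (q + 1) / q.factorial := h1
      _ ≤ Cz * h ^ (q + 1) / q.factorial := by
          gcongr
          nlinarith
      _ ≤ Cz * h ^ (q + 1) := by
          apply div_le_self (by positivity)
          exact_mod_cast Nat.one_le_iff_ne_zero.2 q.factorial_ne_zero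
  -- Taylor bound for the derivative blocks
  have keyn : ∀ n, n ≤ q →
      ‖iteratedDerivWithin n z (Set.Icc t₀ tF) (t + h)
          - ∑ ℓ ∈ Finset.range (q + 1 - n), ((ℓ.factorial : ℝ)⁻¹ * h ^ ℓ) •
              iteratedDerivWithin (n + ℓ) z (Set.Icc t₀ tF) t‖
        ≤ Cz * h ^ (q + 1 - n) := by
    intro n hn
    have hN : q + 1 - n = (q - n) + 1 := by omega
    have hfn : ContDiffOn ℝ ((q - n : ℕ) + 1) (iteratedDerivWithin n z (Set.Icc t₀ tF))
        (Set.Icc t₀ tF) := by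
      apply contDiffOn_iterDeriv_aux hI hz
      have : ((q - n : ℕ) + 1 : ℕ) + (n : ℕ) ≤ q + 1 := by omega
      exact_mod_cast this
    have hCn : ∀ y ∈ Set.Icc t₀ tF,
        ‖iteratedDerivWithin ((q - n) + 1) (iteratedDerivWithin n z (Set.Icc t₀ tF))
            (Set.Icc t₀ tF) y‖ ≤ Cz := by
      intro y hy
      rw [iterDeriv_iterDeriv_aux hI n ((q - n) + 1) y hy]
      have e : n + ((q - n) + 1) = q + 1 := by omega
      rw [e]
      exact hzbound y hy
    have hx : t + h ∈ Set.Icc t tF := ⟨by linarith, by linarith⟩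
    have h1 := taylor_bound_aux hfn hCn ht1 htb hx
    have e : t + h - t = h := by ring
    rw [e] at h1
    have hsum : ∑ k ∈ Finset.range ((q - n) + 1), ((k.factorial : ℝ)⁻¹ * h ^ k) •
          iteratedDerivWithin k (iteratedDerivWithin n z (Set.Icc t₀ tF)) (Set.Icc t₀ tF) t
        = ∑ ℓ ∈ Finset.range (q + 1 - n), ((ℓ.factorial : ℝ)⁻¹ * h ^ ℓ) •
          iteratedDerivWithin (n + ℓ) z (Set.Icc t₀ tF) t := by
      rw [hN]
      refine Finset.sum_congr rfl fun ℓ _ => ?_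
      rw [iterDeriv_iterDeriv_aux hI n ℓ t tmem]
    rw [hsum] at h1
    calc ‖iteratedDerivWithin n z (Set.Icc t₀ tF) (t + h)
          - ∑ ℓ ∈ Finset.range (q + 1 - n), ((ℓ.factorial : ℝ)⁻¹ * h ^ ℓ) •
              iteratedDerivWithin (n + ℓ) z (Set.Icc t₀ tF) t‖
        ≤ Cz * h ^ ((q - n) + 1) / (q - n).factorial := h1
      _ ≤ Cz * h ^ ((q - n) + 1) := by
          apply div_le_self (by positivity)
          exact_mod_cast Nat.one_le_iff_ne_zero.2 (q - n).factorial_ne_zero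
      _ = Cz * h ^ (q + 1 - n) := by rw [hN]
  -- componentwise bound
  have comp_bound : ∀ i : Fin r,
      ‖(∑ k ∈ Finset.range (q + 1),
          (w k i * h ^ k) • iteratedDerivWithin k z (Set.Icc t₀ tF) (t + h))
        - ∑ j : Fin r, Minf i j •
            (∑ k ∈ Finset.range (q + 1),
              (w k j * h ^ k) • iteratedDerivWithin k z (Set.Icc t₀ tF) t)
        - ∑ j : Fin s, D i j • z (t + c j * h)‖ ≤ B₀ * h ^ (q + 1) := by
    intro i
    -- the key algebraic identity
    have key_alg : (∑ j : Fin r, Minf i j • (∑ k ∈ Finset.range (q + 1),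
            (w k j * h ^ k) • iteratedDerivWithin k z (Set.Icc t₀ tF) t))
          + ∑ j : Fin s, D i j • (∑ k ∈ Finset.range (q + 1),
            ((k.factorial : ℝ)⁻¹ * (c j * h) ^ k) • iteratedDerivWithin k z (Set.Icc t₀ tF) t)
        = ∑ n ∈ Finset.range (q + 1), (w n i * h ^ n) •
            (∑ ℓ ∈ Finset.range (q + 1 - n), ((ℓ.factorial : ℝ)⁻¹ * h ^ ℓ) •
              iteratedDerivWithin (n + ℓ) z (Set.Icc t₀ tF) t) := by
      simp_rw [Finset.smul_sum, smul_smul]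
      rw [← sum_range_diag_aux (q + 1)
        (fun ℓ nn => (w nn i * h ^ nn * ((ℓ.factorial : ℝ)⁻¹ * h ^ ℓ)) •
          iteratedDerivWithin (nn + ℓ) z (Set.Icc t₀ tF) t)]
      rw [Finset.sum_comm (s := Finset.univ) (t := Finset.range (q + 1)),
        Finset.sum_comm (s := Finset.univ) (t := Finset.range (q + 1)),
        ← Finset.sum_add_distrib]
      refine Finset.sum_congr rfl fun k hk => ?_
      have hkq : k ≤ q := Nat.lt_succ_iff.1 (Finset.mem_range.1 hk)
      have rhs_eq : ∑ ℓ ∈ Finset.range (k + 1),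
            (w (k - ℓ) i * h ^ (k - ℓ) * ((ℓ.factorial : ℝ)⁻¹ * h ^ ℓ)) •
              iteratedDerivWithin ((k - ℓ) + ℓ) z (Set.Icc t₀ tF) t
          = ∑ ℓ ∈ Finset.range (k + 1),
            ((ℓ.factorial : ℝ)⁻¹ * w (k - ℓ) i * h ^ k) •
              iteratedDerivWithin k z (Set.Icc t₀ tF) t := by
        refine Finset.sum_congr rfl fun ℓ hℓ => ?_
        have hℓk : ℓ ≤ k := Nat.lt_succ_iff.1 (Finset.mem_range.1 hℓ)
        rw [Nat.sub_add_cancel hℓk]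
        congr 1
        rw [show w (k - ℓ) i * h ^ (k - ℓ) * ((ℓ.factorial : ℝ)⁻¹ * h ^ ℓ)
            = (ℓ.factorial : ℝ)⁻¹ * w (k - ℓ) i * (h ^ (k - ℓ) * h ^ ℓ) by ring,
          pow_sub_mul_pow h hℓk]
      rw [rhs_eq, ← Finset.sum_smul, ← Finset.sum_smul, ← Finset.sum_smul, ← add_smul]
      congr 1
      have e1 : ∑ j : Fin r, Minf i j * (w k j * h ^ k)
          = (∑ j : Fin r, Minf i j * w k j) * h ^ k := by
        rw [Finset.sum_mul]; exact Finset.sum_congr rfl fun j _ => by ring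
      have e2 : ∑ j : Fin s, D i j * ((k.factorial : ℝ)⁻¹ * (c j * h) ^ k)
          = (∑ j : Fin s, D i j * (c j ^ k / (k.factorial : ℝ))) * h ^ k := by
        rw [Finset.sum_mul]
        refine Finset.sum_congr rfl fun j _ => ?_
        rw [mul_pow]
        ring
      have e3 : ∑ ℓ ∈ Finset.range (k + 1), (ℓ.factorial : ℝ)⁻¹ * w (k - ℓ) i * h ^ k
          = (∑ ℓ ∈ Finset.range (k + 1), (ℓ.factorial : ℝ)⁻¹ * w (k - ℓ) i) * h ^ k :=
        (Finset.sum_mul _ _ _).symm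
      rw [e1, e2, e3, ← add_mul]
      have := hidk i k hkq
      linear_combination (-(h ^ k)) * this
    -- decompose the residual
    have hFi : (∑ k ∈ Finset.range (q + 1),
          (w k i * h ^ k) • iteratedDerivWithin k z (Set.Icc t₀ tF) (t + h))
        - ∑ j : Fin r, Minf i j •
            (∑ k ∈ Finset.range (q + 1),
              (w k j * h ^ k) • iteratedDerivWithin k z (Set.Icc t₀ tF) t)
        - ∑ j : Fin s, D i j • z (t + c j * h)
        = (∑ n ∈ Finset.range (q + 1), (w n i * h ^ n) •
            (iteratedDerivWithin n z (Set.Icc t₀ tF) (t + h)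
              - ∑ ℓ ∈ Finset.range (q + 1 - n), ((ℓ.factorial : ℝ)⁻¹ * h ^ ℓ) •
                iteratedDerivWithin (n + ℓ) z (Set.Icc t₀ tF) t))
          - ∑ j : Fin s, D i j • (z (t + c j * h)
              - ∑ k ∈ Finset.range (q + 1), ((k.factorial : ℝ)⁻¹ * (c j * h) ^ k) •
                iteratedDerivWithin k z (Set.Icc t₀ tF) t) := by
      simp_rw [smul_sub]
      rw [Finset.sum_sub_distrib, Finset.sum_sub_distrib, ← key_alg]
      abel
    rw [hFi]
    have bound1 : ‖∑ n ∈ Finset.range (q + 1), (w n i * h ^ n) •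
          (iteratedDerivWithin n z (Set.Icc t₀ tF) (t + h)
            - ∑ ℓ ∈ Finset.range (q + 1 - n), ((ℓ.factorial : ℝ)⁻¹ * h ^ ℓ) •
              iteratedDerivWithin (n + ℓ) z (Set.Icc t₀ tF) t)‖
        ≤ (∑ n ∈ Finset.range (q + 1), |w n i|) * Cz * h ^ (q + 1) := by
      calc ‖∑ n ∈ Finset.range (q + 1), (w n i * h ^ n) •
          (iteratedDerivWithin n z (Set.Icc t₀ tF) (t + h)
            - ∑ ℓ ∈ Finset.range (q + 1 - n), ((ℓ.factorial : ℝ)⁻¹ * h ^ ℓ) •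
              iteratedDerivWithin (n + ℓ) z (Set.Icc t₀ tF) t)‖
          ≤ ∑ n ∈ Finset.range (q + 1), ‖(w n i * h ^ n) •
            (iteratedDerivWithin n z (Set.Icc t₀ tF) (t + h)
              - ∑ ℓ ∈ Finset.range (q + 1 - n), ((ℓ.factorial : ℝ)⁻¹ * h ^ ℓ) •
                iteratedDerivWithin (n + ℓ) z (Set.Icc t₀ tF) t)‖ := norm_sum_le _ _
        _ ≤ ∑ n ∈ Finset.range (q + 1), |w n i| * Cz * h ^ (q + 1) := by
            refine Finset.sum_le_sum fun n hn => ?_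
            have hnq : n ≤ q := Nat.lt_succ_iff.1 (Finset.mem_range.1 hn)
            rw [norm_smul, Real.norm_eq_abs, abs_mul, abs_pow, abs_of_pos hh0]
            calc |w n i| * h ^ n * ‖iteratedDerivWithin n z (Set.Icc t₀ tF) (t + h)
                - ∑ ℓ ∈ Finset.range (q + 1 - n), ((ℓ.factorial : ℝ)⁻¹ * h ^ ℓ) •
                  iteratedDerivWithin (n + ℓ) z (Set.Icc t₀ tF) t‖
                ≤ |w n i| * h ^ n * (Cz * h ^ (q + 1 - n)) := by
                  gcongr
                  exact keyn n hnq
              _ = |w n i| * Cz * (h ^ n * h ^ (q + 1 - n)) := by ring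
              _ = |w n i| * Cz * h ^ (q + 1) := by
                  rw [pow_mul_pow_sub h (by omega : n ≤ q + 1)]
        _ = (∑ n ∈ Finset.range (q + 1), |w n i|) * Cz * h ^ (q + 1) := by
            rw [Finset.sum_mul, Finset.sum_mul]
    have bound2 : ‖∑ j : Fin s, D i j • (z (t + c j * h)
          - ∑ k ∈ Finset.range (q + 1), ((k.factorial : ℝ)⁻¹ * (c j * h) ^ k) •
            iteratedDerivWithin k z (Set.Icc t₀ tF) t)‖
        ≤ (∑ j : Fin s, |D i j|) * Cz * h ^ (q + 1) := by
      calc ‖∑ j : Fin s, D i j • (z (t + c j * h)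
          - ∑ k ∈ Finset.range (q + 1), ((k.factorial : ℝ)⁻¹ * (c j * h) ^ k) •
            iteratedDerivWithin k z (Set.Icc t₀ tF) t)‖
          ≤ ∑ j : Fin s, ‖D i j • (z (t + c j * h)
            - ∑ k ∈ Finset.range (q + 1), ((k.factorial : ℝ)⁻¹ * (c j * h) ^ k) •
              iteratedDerivWithin k z (Set.Icc t₀ tF) t)‖ := norm_sum_le _ _
        _ ≤ ∑ j : Fin s, |D i j| * (Cz * h ^ (q + 1)) := by
            refine Finset.sum_le_sum fun j _ => ?_
            rw [norm_smul, Real.norm_eq_abs]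
            gcongr
            exact keyc j
        _ = (∑ j : Fin s, |D i j|) * Cz * h ^ (q + 1) := by
            rw [Finset.sum_mul, Finset.sum_mul]
            exact Finset.sum_congr rfl fun j _ => by ring
    calc ‖(∑ n ∈ Finset.range (q + 1), (w n i * h ^ n) •
            (iteratedDerivWithin n z (Set.Icc t₀ tF) (t + h)
              - ∑ ℓ ∈ Finset.range (q + 1 - n), ((ℓ.factorial : ℝ)⁻¹ * h ^ ℓ) •
                iteratedDerivWithin (n + ℓ) z (Set.Icc t₀ tF) t))
          - ∑ j : Fin s, D i j • (z (t + c j * h)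
              - ∑ k ∈ Finset.range (q + 1), ((k.factorial : ℝ)⁻¹ * (c j * h) ^ k) •
                iteratedDerivWithin k z (Set.Icc t₀ tF) t)‖
        ≤ (∑ n ∈ Finset.range (q + 1), |w n i|) * Cz * h ^ (q + 1)
          + (∑ j : Fin s, |D i j|) * Cz * h ^ (q + 1) :=
          le_trans (norm_sub_le _ _) (add_le_add bound1 bound2)
      _ ≤ B₀ * h ^ (q + 1) := by
          have hw_le : (∑ n ∈ Finset.range (q + 1), |w n i|)
              ≤ ∑ n ∈ Finset.range (q + 1), ∑ i' : Fin r, |w n i'| := by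
            refine Finset.sum_le_sum fun n _ => ?_
            exact Finset.single_le_sum (f := fun i' => |w n i'|) (fun i' _ => abs_nonneg _) (Finset.mem_univ i)
          have hD_le : (∑ j : Fin s, |D i j|) ≤ ∑ i' : Fin r, ∑ j : Fin s, |D i' j| :=
            Finset.single_le_sum (f := fun i' => ∑ j : Fin s, |D i' j|)
              (fun i' _ => Finset.sum_nonneg fun j _ => abs_nonneg _) (Finset.mem_univ i)
          have hpow : (0:ℝ) ≤ h ^ (q + 1) := by positivity
          have hB : (∑ n ∈ Finset.range (q + 1), |w n i|) * Cz + (∑ j : Fin s, |D i j|) * Cz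
              ≤ B₀ := by
            have e : (∑ n ∈ Finset.range (q + 1), |w n i|) * Cz + (∑ j : Fin s, |D i j|) * Cz
                = Cz * ((∑ n ∈ Finset.range (q + 1), |w n i|) + ∑ j : Fin s, |D i j|) := by
              ring
            rw [e, hB₀, hW]
            have h2 : (∑ n ∈ Finset.range (q + 1), |w n i|) + ∑ j : Fin s, |D i j|
                ≤ (∑ n ∈ Finset.range (q + 1), ∑ i' : Fin r, |w n i'|)
                  + ∑ i' : Fin r, ∑ j : Fin s, |D i' j| := add_le_add hw_le hD_le
            have h3 := mul_le_mul_of_nonneg_left h2 hCz0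
            linarith
          calc (∑ n ∈ Finset.range (q + 1), |w n i|) * Cz * h ^ (q + 1)
              + (∑ j : Fin s, |D i j|) * Cz * h ^ (q + 1)
              = ((∑ n ∈ Finset.range (q + 1), |w n i|) * Cz
                + (∑ j : Fin s, |D i j|) * Cz) * h ^ (q + 1) := by ring
            _ ≤ B₀ * h ^ (q + 1) := mul_le_mul_of_nonneg_right hB hpow
  -- assemble the ℓ² norm
  have hB : (0:ℝ) ≤ B₀ * h ^ (q + 1) := by positivity
  calc ‖(WithLp.equiv 2 (Fin r → EuclideanSpace ℝ (Fin m))).symm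
          (fun i =>
            (∑ k ∈ Finset.range (q + 1),
              (w k i * h ^ k) • iteratedDerivWithin k z (Set.Icc t₀ tF) (t + h))
            - ∑ j : Fin r, Minf i j •
                (∑ k ∈ Finset.range (q + 1),
                  (w k j * h ^ k) • iteratedDerivWithin k z (Set.Icc t₀ tF) t)
            - ∑ j : Fin s, D i j • z (t + c j * h))‖
      ≤ Real.sqrt (Fintype.card (Fin r)) * (B₀ * h ^ (q + 1)) := by
        apply pilp_norm_le_aux _ hB
        intro i
        simpa using comp_bound i
    _ = Real.sqrt r * B₀ * h ^ (q + 1) := by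
        rw [Fintype.card_fin]
        ring
end

section
/- Let M_∞ ∈ ℝ^{r×r}, m ≥ 1, integers q ≥ 1 and p ∈ {q, q+1}, and constants C, T > 0. Let h ∈ (0, 1] and let (Δz_n)_{n≥0} in (ℝ^m)^r and (δ_n)_{n≥1} satisfy Δz_n = (M_∞ ⊗ I_m)·Δz_{n−1} + δ_n, with ‖Δz_0‖ ≤ C·h^{p}, ‖δ_n‖ ≤ C·h^{q+1} for all n, and ‖δ_n − δ_{n−1}‖ ≤ C·h^{q+2} for all n ≥ 2. Then: (1) if sup_{k≥0} ‖M_∞^k‖ ≤ C, there is a K depending only on C, T, q, p, r such that ‖Δz_n‖ ≤ K·h^{q} for all n with n·h ≤ T; (2) if moreover there is an invertible complex matrix X such that X·M_∞·X⁻¹ is block diagonal with one block a diagonal matrix whose every diagonal entry λ satisfies λ^{L} = −1 for some positive integer L (allowed to depend on the entry), and the other block a matrix of spectral radius strictly less than 1, then there is a K, depending only on C, T, q, p, r, X and the blocks, such that ‖Δz_n‖ ≤ K·h^{min(p, q+1)} for all n with n·h ≤ T. -/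
open scoped Matrix.Norms.L2Operator Kronecker

/-- The linear map on block vectors induced by the Kronecker product `P ⊗ Q`. -/
noncomputable def kronLin {a b m : ℕ} (P : Matrix (Fin a) (Fin b) ℝ)
    (Q : Matrix (Fin m) (Fin m) ℝ) :
    EuclideanSpace ℝ (Fin b × Fin m) →ₗ[ℝ] EuclideanSpace ℝ (Fin a × Fin m) :=
  Matrix.toEuclideanLin (P ⊗ₖ Q)

section Aux
open Matrix
variable {𝕜 : Type*} [RCLike 𝕜]

lemma euclid_coord_le_norm {ι : Type*} [Fintype ι] (x : EuclideanSpace 𝕜 ι) (i : ι) :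
    ‖x i‖ ≤ ‖x‖ := by
  rw [EuclideanSpace.norm_eq]
  have h1 : ‖x i‖ = Real.sqrt (‖x i‖ ^ 2) := (Real.sqrt_sq (norm_nonneg _)).symm
  rw [h1]
  exact Real.sqrt_le_sqrt <|
    Finset.single_le_sum (fun j _ => sq_nonneg ‖x j‖) (Finset.mem_univ i)

lemma entry_le_l2_opNorm {a b : ℕ} (A : Matrix (Fin a) (Fin b) 𝕜) (i : Fin a) (j : Fin b) :
    ‖A i j‖ ≤ ‖A‖ := by
  have h := A.l2_opNorm_mulVec (EuclideanSpace.single j (1 : 𝕜))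
  rw [EuclideanSpace.norm_single, norm_one, mul_one] at h
  refine le_trans ?_ h
  have h2 : ((EuclideanSpace.equiv (Fin a) 𝕜).symm <|
      A *ᵥ (EuclideanSpace.single j (1 : 𝕜))) i = A i j := by
    simp [Matrix.mulVec, dotProduct, EuclideanSpace.single_apply, mul_ite]
  calc ‖A i j‖ = ‖((EuclideanSpace.equiv (Fin a) 𝕜).symm <|
      A *ᵥ (EuclideanSpace.single j (1 : 𝕜))) i‖ := by rw [h2]
  _ ≤ _ := euclid_coord_le_norm _ i

end Aux

section Kron
open Matrix Finset

lemma kronLin_apply_coord {a b m : ℕ} (P : Matrix (Fin a) (Fin b) ℝ)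
    (v : EuclideanSpace ℝ (Fin b × Fin m)) (i : Fin a) (j : Fin m) :
    kronLin P (1 : Matrix (Fin m) (Fin m) ℝ) v (i, j) = ∑ k : Fin b, P i k * v (k, j) := by
  show ((P ⊗ₖ (1 : Matrix (Fin m) (Fin m) ℝ)) *ᵥ (WithLp.equiv 2 _) v) (i, j) = _
  simp [Matrix.mulVec, dotProduct, Fintype.sum_prod_type, Matrix.one_apply,
    mul_ite, ite_mul, mul_comm]

lemma euclid_norm_sq {ι : Type*} [Fintype ι] (x : EuclideanSpace ℝ ι) :
    ‖x‖ ^ 2 = ∑ i : ι, x i ^ 2 := by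
  rw [EuclideanSpace.norm_eq, Real.sq_sqrt (Finset.sum_nonneg fun i _ => sq_nonneg _)]
  simp [Real.norm_eq_abs, sq_abs]

lemma kronLin_norm_le {a m : ℕ} (P : Matrix (Fin a) (Fin a) ℝ) (B : ℝ)
    (hP : ∀ i k, |P i k| ≤ B)
    (v : EuclideanSpace ℝ (Fin a × Fin m)) :
    ‖kronLin P (1 : Matrix (Fin m) (Fin m) ℝ) v‖ ≤ a * B * ‖v‖ := by
  rcases Nat.eq_zero_or_pos a with ha | ha
  · subst ha
    have h0 : ‖kronLin P (1 : Matrix (Fin m) (Fin m) ℝ) v‖ = 0 := by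
      rw [EuclideanSpace.norm_eq]; simp
    rw [h0]; simp
  · have hB : 0 ≤ B := le_trans (abs_nonneg _) (hP ⟨0, ha⟩ ⟨0, ha⟩)
    set w := kronLin P (1 : Matrix (Fin m) (Fin m) ℝ) v with hw
    have hsq : ∀ i k, P i k ^ 2 ≤ B ^ 2 := by
      intro i k
      have h1 := hP i k
      nlinarith [abs_nonneg (P i k), le_abs_self (P i k), neg_abs_le (P i k)]
    have hv : ‖v‖ ^ 2 = ∑ j : Fin m, ∑ k : Fin a, v (k, j) ^ 2 := by
      rw [euclid_norm_sq, Fintype.sum_prod_type, Finset.sum_comm]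
    have key : ‖w‖ ^ 2 ≤ (a * B * ‖v‖) ^ 2 := by
      have h1 : ‖w‖ ^ 2 = ∑ i : Fin a, ∑ j : Fin m, (∑ k : Fin a, P i k * v (k, j)) ^ 2 := by
        rw [euclid_norm_sq, Fintype.sum_prod_type]
        exact Finset.sum_congr rfl fun i _ => Finset.sum_congr rfl fun j _ => by
          rw [hw, kronLin_apply_coord]
      rw [h1]
      have h2 : ∀ i : Fin a, ∀ j : Fin m,
          (∑ k : Fin a, P i k * v (k, j)) ^ 2 ≤ (a * B ^ 2) * ∑ k : Fin a, v (k, j) ^ 2 := by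
        intro i j
        refine le_trans (Finset.sum_mul_sq_le_sq_mul_sq _ _ _) ?_
        have h3 : ∑ k : Fin a, P i k ^ 2 ≤ (a : ℝ) * B ^ 2 := by
          calc ∑ k : Fin a, P i k ^ 2 ≤ ∑ _k : Fin a, B ^ 2 :=
                Finset.sum_le_sum fun k _ => hsq i k
          _ = a * B ^ 2 := by simp [mul_comm]
        exact mul_le_mul_of_nonneg_right h3 (Finset.sum_nonneg fun k _ => sq_nonneg _)
      calc ∑ i : Fin a, ∑ j : Fin m, (∑ k : Fin a, P i k * v (k, j)) ^ 2
          ≤ ∑ _i : Fin a, ∑ j : Fin m, (a * B ^ 2) * ∑ k : Fin a, v (k, j) ^ 2 :=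
            Finset.sum_le_sum fun i _ => Finset.sum_le_sum fun j _ => h2 i j
        _ = (a * B * ‖v‖) ^ 2 := by
            simp only [← Finset.mul_sum, Finset.sum_const, Finset.card_univ, Fintype.card_fin,
              nsmul_eq_mul]
            rw [mul_pow, mul_pow, hv]; ring
    calc ‖w‖ = Real.sqrt (‖w‖ ^ 2) := (Real.sqrt_sq (norm_nonneg _)).symm
    _ ≤ Real.sqrt ((a * B * ‖v‖) ^ 2) := Real.sqrt_le_sqrt key
    _ = a * B * ‖v‖ := Real.sqrt_sq (by positivity)

lemma kronLin_mul_apply {a m : ℕ} (P Q : Matrix (Fin a) (Fin a) ℝ)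
    (v : EuclideanSpace ℝ (Fin a × Fin m)) :
    kronLin (P * Q) (1 : Matrix (Fin m) (Fin m) ℝ) v
      = kronLin P 1 (kronLin Q 1 v) := by
  have h : (P * Q) ⊗ₖ (1 : Matrix (Fin m) (Fin m) ℝ)
      = (P ⊗ₖ (1 : Matrix (Fin m) (Fin m) ℝ)) * (Q ⊗ₖ (1 : Matrix (Fin m) (Fin m) ℝ)) := by
    rw [← Matrix.mul_kronecker_mul, Matrix.one_mul]
  unfold kronLin
  rw [h]
  simp only [Matrix.toEuclideanLin_apply, Equiv.apply_symm_apply, ← Matrix.mulVec_mulVec]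

lemma kronLin_one_apply {a m : ℕ} (v : EuclideanSpace ℝ (Fin a × Fin m)) :
    kronLin (1 : Matrix (Fin a) (Fin a) ℝ) (1 : Matrix (Fin m) (Fin m) ℝ) v = v := by
  unfold kronLin
  rw [Matrix.one_kronecker_one]
  simp only [Matrix.toEuclideanLin_apply, Matrix.one_mulVec]

lemma kronLin_add_apply {a m : ℕ} (P Q : Matrix (Fin a) (Fin a) ℝ)
    (v : EuclideanSpace ℝ (Fin a × Fin m)) :
    kronLin (P + Q) (1 : Matrix (Fin m) (Fin m) ℝ) v
      = kronLin P 1 v + kronLin Q 1 v := by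
  unfold kronLin
  rw [Matrix.add_kronecker, map_add]
  rfl

lemma kronLin_sub_apply {a m : ℕ} (P Q : Matrix (Fin a) (Fin a) ℝ)
    (v : EuclideanSpace ℝ (Fin a × Fin m)) :
    kronLin (P - Q) (1 : Matrix (Fin m) (Fin m) ℝ) v
      = kronLin P 1 v - kronLin Q 1 v := by
  have h := kronLin_add_apply (m := m) (P - Q) Q v
  rw [sub_add_cancel] at h
  rw [h]; abel

end Kron

noncomputable def psum {r : ℕ} (M : Matrix (Fin r) (Fin r) ℝ) (j : ℕ) :
    Matrix (Fin r) (Fin r) ℝ :=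
  ∑ i ∈ Finset.range (j + 1), M ^ i

lemma psum_zero {r : ℕ} (M : Matrix (Fin r) (Fin r) ℝ) : psum M 0 = 1 := by
  simp [psum]

lemma mul_psum {r : ℕ} (M : Matrix (Fin r) (Fin r) ℝ) (j : ℕ) :
    M * psum M j = psum M (j + 1) - 1 := by
  have h : psum M (j + 1) = M * psum M j + 1 := by
    unfold psum
    rw [Finset.mul_sum, Finset.sum_range_succ']
    simp [pow_succ']
  rw [h]; abel

lemma rep {r m : ℕ} (M : Matrix (Fin r) (Fin r) ℝ)
    (Δz δ : ℕ → EuclideanSpace ℝ (Fin r × Fin m))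
    (hrec : ∀ n, 1 ≤ n → Δz n = kronLin M (1 : Matrix (Fin m) (Fin m) ℝ) (Δz (n-1)) + δ n) :
    ∀ n, 1 ≤ n → Δz n = kronLin (M ^ n) (1 : Matrix (Fin m) (Fin m) ℝ) (Δz 0)
      + kronLin (psum M (n-1)) (1 : Matrix (Fin m) (Fin m) ℝ) (δ 1)
      + ∑ i ∈ Finset.range (n - 1),
          kronLin (psum M (n - 2 - i)) (1 : Matrix (Fin m) (Fin m) ℝ) (δ (i+2) - δ (i+1)) := by
  intro n hn
  induction n, hn using Nat.le_induction with
  | base =>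
    have h := hrec 1 le_rfl
    simp only [Nat.sub_self, Finset.range_zero, Finset.sum_empty, add_zero, pow_one] at h ⊢
    rw [h, psum_zero, kronLin_one_apply]
  | succ n hn ih =>
    have h := hrec (n+1) (by omega)
    simp only [Nat.add_sub_cancel] at h
    rw [h, ih, map_add, map_add]
    rw [← kronLin_mul_apply, ← pow_succ']
    rw [← kronLin_mul_apply, mul_psum]
    have hn1 : n - 1 + 1 = n := by omega
    rw [hn1, kronLin_sub_apply, kronLin_one_apply]
    rw [map_sum]
    have hsum : ∀ i ∈ Finset.range (n - 1),
        kronLin M (1 : Matrix (Fin m) (Fin m) ℝ)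
          (kronLin (psum M (n - 2 - i)) (1 : Matrix (Fin m) (Fin m) ℝ) (δ (i+2) - δ (i+1)))
        = kronLin (psum M (n - 1 - i)) (1 : Matrix (Fin m) (Fin m) ℝ) (δ (i+2) - δ (i+1))
            - (δ (i+2) - δ (i+1)) := by
      intro i hi
      rw [Finset.mem_range] at hi
      have h2 : n - 2 - i + 1 = n - 1 - i := by omega
      rw [← kronLin_mul_apply, mul_psum, h2, kronLin_sub_apply, kronLin_one_apply]
    rw [Finset.sum_congr rfl hsum, Finset.sum_sub_distrib]
    have htel : ∑ i ∈ Finset.range (n - 1), (δ (i+2) - δ (i+1)) = δ n - δ 1 := by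
      have := Finset.sum_range_sub (fun i => δ (i + 1)) (n - 1)
      simpa [hn1] using this
    rw [htel]
    -- target sum : range ((n+1)-1) = range n, split off last term
    have hidx : (n + 1) - 1 = n := by omega
    have hlast : ∑ i ∈ Finset.range n,
        kronLin (psum M ((n+1) - 2 - i)) (1 : Matrix (Fin m) (Fin m) ℝ) (δ (i+2) - δ (i+1))
        = (∑ i ∈ Finset.range (n-1),
            kronLin (psum M (n - 1 - i)) (1 : Matrix (Fin m) (Fin m) ℝ) (δ (i+2) - δ (i+1)))
          + (δ (n+1) - δ n) := by
      have hsplit : n = (n - 1) + 1 := by omega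
      rw [hsplit, Finset.sum_range_succ, ← hsplit]
      have h3 : (n + 1) - 2 - (n - 1) = 0 := by omega
      have h4 : n - 1 + 2 = n + 1 := by omega
      have h5 : n - 1 + 1 = n := by omega
      rw [h3, h4, psum_zero, kronLin_one_apply]
      have h6 : ∀ x : ℕ, n + 1 - 2 - x = n - 1 - x := fun x => by omega
      simp only [h6]
    rw [hidx, hlast]
    abel

lemma norm_Δz_le {r m : ℕ} (M : Matrix (Fin r) (Fin r) ℝ)
    (Δz δ : ℕ → EuclideanSpace ℝ (Fin r × Fin m))
    (hrec : ∀ n, 1 ≤ n → Δz n = kronLin M (1 : Matrix (Fin m) (Fin m) ℝ) (Δz (n-1)) + δ n)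
    (n : ℕ) (hn : 1 ≤ n) (CM Bp : ℝ)
    (hCM : ∀ i j, |(M ^ n) i j| ≤ CM)
    (hBp : ∀ jj, jj ≤ n - 1 → ∀ i j, |psum M jj i j| ≤ Bp) :
    ‖Δz n‖ ≤ r * CM * ‖Δz 0‖ + r * Bp * ‖δ 1‖
      + ∑ i ∈ Finset.range (n - 1), r * Bp * ‖δ (i+2) - δ (i+1)‖ := by
  rw [rep M Δz δ hrec n hn]
  refine le_trans (norm_add_le _ _) ?_
  refine add_le_add (le_trans (norm_add_le _ _) (add_le_add ?_ ?_))
    (le_trans (norm_sum_le _ _) (Finset.sum_le_sum fun i hi => ?_))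
  · exact kronLin_norm_le _ _ hCM _
  · exact kronLin_norm_le _ _ (hBp (n-1) le_rfl) _
  · refine kronLin_norm_le _ _ (hBp (n - 2 - i) (by omega)) _

lemma entries_pow_le {r : ℕ} (M : Matrix (Fin r) (Fin r) ℝ) (C : ℝ)
    (hpow : ∀ k : ℕ, ‖M ^ k‖ ≤ C) (k : ℕ) (i j : Fin r) : |(M ^ k) i j| ≤ C := by
  have h := entry_le_l2_opNorm (M ^ k) i j
  rw [Real.norm_eq_abs] at h
  exact h.trans (hpow k)

lemma part1 (r q p : ℕ) (hq : 1 ≤ q) (hpq : p = q ∨ p = q + 1)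
    (C T : ℝ) (hC : 0 < C) (hT : 0 < T)
    (Minf : Matrix (Fin r) (Fin r) ℝ)
    (hpow : ∀ k : ℕ, ‖Minf ^ k‖ ≤ C) :
    ∃ K > (0 : ℝ), ∀ (m : ℕ), ∀ h ∈ Set.Ioc (0 : ℝ) 1,
      ∀ Δz δ : ℕ → EuclideanSpace ℝ (Fin r × Fin m),
        (∀ n, 1 ≤ n → Δz n = kronLin Minf (1 : Matrix (Fin m) (Fin m) ℝ) (Δz (n - 1)) + δ n) →
        ‖Δz 0‖ ≤ C * h ^ p →
        (∀ n, 1 ≤ n → ‖δ n‖ ≤ C * h ^ (q + 1)) →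
        (∀ n, 2 ≤ n → ‖δ n - δ (n - 1)‖ ≤ C * h ^ (q + 2)) →
        ∀ n : ℕ, (n : ℝ) * h ≤ T → ‖Δz n‖ ≤ K * h ^ q := by
  refine ⟨C + r * C^2 * (1 + T + T^2) + 1, by positivity, ?_⟩
  intro m h hh Δz δ hrec h0 hδ hδδ n hnT
  obtain ⟨hh0, hh1⟩ := hh
  have hqp : q ≤ p := by rcases hpq with rfl | rfl <;> omega
  have hhq : (0:ℝ) < h ^ q := pow_pos hh0 q
  have hhp : h ^ p ≤ h ^ q := pow_le_pow_of_le_one hh0.le hh1 hqp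
  have hrC : (0:ℝ) ≤ r * C := by positivity
  rcases Nat.eq_zero_or_pos n with rfl | hn
  · calc ‖Δz 0‖ ≤ C * h ^ p := h0
    _ ≤ C * h ^ q := by nlinarith
    _ ≤ (C + r * C^2 * (1 + T + T^2) + 1) * h ^ q := by
        nlinarith [mul_nonneg (by positivity : (0:ℝ) ≤ ↑r * C^2 * (1+T+T^2) + 1) hhq.le]
  · have hnh0 : (0:ℝ) ≤ (n:ℝ) * h := by positivity
    have hpsum : ∀ jj, jj ≤ n - 1 → ∀ i j, |psum Minf jj i j| ≤ (n : ℝ) * C := by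
      intro jj hjj i j
      unfold psum
      calc |(∑ i' ∈ Finset.range (jj+1), Minf ^ i') i j|
          = |∑ i' ∈ Finset.range (jj+1), (Minf ^ i') i j| := by
            rw [Matrix.sum_apply]
        _ ≤ ∑ i' ∈ Finset.range (jj+1), |(Minf ^ i') i j| :=
            Finset.abs_sum_le_sum_abs _ _
        _ ≤ ∑ _i' ∈ Finset.range (jj+1), C :=
            Finset.sum_le_sum fun i' _ => entries_pow_le Minf C hpow i' i j
        _ = ((jj+1 : ℕ) : ℝ) * C := by simp [mul_comm]
        _ ≤ (n : ℝ) * C := by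
            have : jj + 1 ≤ n := by omega
            exact mul_le_mul_of_nonneg_right (by exact_mod_cast this) hC.le
    have hmain := norm_Δz_le Minf Δz δ hrec n hn C ((n:ℝ) * C)
      (fun i j => entries_pow_le Minf C hpow n i j) hpsum
    have e1 : (r:ℝ) * C * ‖Δz 0‖ ≤ r * C^2 * h ^ q := by
      calc (r:ℝ) * C * ‖Δz 0‖ ≤ r * C * (C * h ^ p) := mul_le_mul_of_nonneg_left h0 hrC
      _ = r * C^2 * h ^ p := by ring
      _ ≤ r * C^2 * h ^ q := mul_le_mul_of_nonneg_left hhp (by positivity)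
    have e2 : (r:ℝ) * ((n:ℝ) * C) * ‖δ 1‖ ≤ r * C^2 * T * h ^ q := by
      calc (r:ℝ) * ((n:ℝ) * C) * ‖δ 1‖ ≤ r * ((n:ℝ) * C) * (C * h ^ (q+1)) :=
            mul_le_mul_of_nonneg_left (hδ 1 le_rfl) (by positivity)
      _ = (r * C^2 * h ^ q) * ((n:ℝ) * h) := by rw [pow_succ]; ring
      _ ≤ (r * C^2 * h ^ q) * T := mul_le_mul_of_nonneg_left hnT (by positivity)
      _ = r * C^2 * T * h ^ q := by ring
    have e3 : ∑ i ∈ Finset.range (n - 1), (r:ℝ) * ((n:ℝ) * C) * ‖δ (i+2) - δ (i+1)‖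
        ≤ r * C^2 * T^2 * h ^ q := by
      calc ∑ i ∈ Finset.range (n - 1), (r:ℝ) * ((n:ℝ) * C) * ‖δ (i+2) - δ (i+1)‖
          ≤ ∑ _i ∈ Finset.range (n - 1), (r:ℝ) * ((n:ℝ) * C) * (C * h ^ (q+2)) := by
            refine Finset.sum_le_sum fun i _ => ?_
            refine mul_le_mul_of_nonneg_left ?_ (by positivity)
            have := hδδ (i+2) (by omega)
            simpa using this
        _ = ((n-1 : ℕ) : ℝ) * ((r:ℝ) * ((n:ℝ) * C) * (C * h ^ (q+2))) := by
            simp [mul_comm]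
        _ ≤ (n : ℝ) * ((r:ℝ) * ((n:ℝ) * C) * (C * h ^ (q+2))) := by
            refine mul_le_mul_of_nonneg_right ?_ (by positivity)
            exact_mod_cast Nat.sub_le n 1
        _ = (r * C^2 * h ^ q) * (((n:ℝ) * h) * ((n:ℝ) * h)) := by
            rw [show q + 2 = q + 1 + 1 from rfl, pow_succ, pow_succ]; ring
        _ ≤ (r * C^2 * h ^ q) * (T * T) := by
            refine mul_le_mul_of_nonneg_left ?_ (by positivity)
            exact mul_le_mul hnT hnT hnh0 hT.le
        _ = r * C^2 * T^2 * h ^ q := by ring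
    calc ‖Δz n‖ ≤ _ := hmain
    _ ≤ r * C^2 * h ^ q + r * C^2 * T * h ^ q + r * C^2 * T^2 * h ^ q :=
        add_le_add (add_le_add e1 e2) e3
    _ ≤ (C + r * C^2 * (1 + T + T^2) + 1) * h ^ q := by
        nlinarith [mul_nonneg (by positivity : (0:ℝ) ≤ C + 1) hhq.le]

section Part2
open Matrix Finset Filter

lemma nsum_bound {r₂ : ℕ} (Nmat : Matrix (Fin r₂) (Fin r₂) ℂ)
    (hN : spectralRadius ℂ Nmat < 1) :
    ∃ BN : ℝ, 0 ≤ BN ∧ ∀ k : ℕ, ‖∑ i ∈ Finset.range k, Nmat ^ i‖ ≤ BN := by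
  haveI : CompleteSpace (Matrix (Fin r₂) (Fin r₂) ℂ) := FiniteDimensional.complete ℂ _
  have hsum : Summable (fun i : ℕ => ‖Nmat ^ i‖) := by
    obtain ⟨c, hc1, hc2⟩ := exists_between hN
    have hctop : c ≠ ⊤ := (hc2.trans ENNReal.one_lt_top).ne
    have hc0 : (0:ℝ) ≤ c.toReal := ENNReal.toReal_nonneg
    have hc1' : c.toReal < 1 := by
      rw [← ENNReal.toReal_one]
      exact ENNReal.toReal_strict_mono ENNReal.one_ne_top hc2
    have htends := spectrum.pow_nnnorm_pow_one_div_tendsto_nhds_spectralRadius Nmat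
    have hev : ∀ᶠ n : ℕ in atTop, (‖Nmat ^ n‖₊ : ENNReal) ^ (1/(n:ℝ)) < c :=
      htends.eventually_lt_const hc1
    have hev2 : ∀ᶠ n : ℕ in atTop, ‖(fun i : ℕ => ‖Nmat ^ i‖) n‖ ≤ c.toReal ^ n := by
      filter_upwards [hev, eventually_ge_atTop 1] with n hn hn1
      have hne : (n:ℝ) ≠ 0 := by positivity
      have hx : (‖Nmat ^ n‖₊ : ENNReal) ≤ c ^ n := by
        have h1 : ((‖Nmat ^ n‖₊ : ENNReal) ^ (1/(n:ℝ))) ^ (n:ℝ) ≤ c ^ (n:ℝ) :=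
          ENNReal.rpow_le_rpow hn.le (by positivity)
        rw [← ENNReal.rpow_natCast c n]
        rwa [← ENNReal.rpow_mul, one_div, inv_mul_cancel₀ hne, ENNReal.rpow_one] at h1
      have h2 : ‖Nmat ^ n‖ ≤ (c ^ n).toReal := by
        have h3 := ENNReal.toReal_mono (ENNReal.pow_ne_top hctop) hx
        simpa using h3
      rw [norm_norm]
      calc ‖Nmat ^ n‖ ≤ (c ^ n).toReal := h2
      _ = c.toReal ^ n := ENNReal.toReal_pow c n
    exact Summable.of_norm_bounded_eventually_nat
      (summable_geometric_of_lt_one hc0 hc1') hev2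
  refine ⟨∑' i, ‖Nmat ^ i‖, tsum_nonneg fun i => norm_nonneg _, fun k => ?_⟩
  calc ‖∑ i ∈ Finset.range k, Nmat ^ i‖ ≤ ∑ i ∈ Finset.range k, ‖Nmat ^ i‖ :=
      norm_sum_le _ _
  _ ≤ ∑' i, ‖Nmat ^ i‖ := Summable.sum_le_tsum _ (fun i _ => norm_nonneg _) hsum

lemma fromBlocks_pow' {r₁ r₂ : ℕ} (D : Matrix (Fin r₁) (Fin r₁) ℂ)
    (N : Matrix (Fin r₂) (Fin r₂) ℂ) (k : ℕ) :
    (Matrix.fromBlocks D 0 0 N) ^ k = Matrix.fromBlocks (D ^ k) 0 0 (N ^ k) := by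
  induction k with
  | zero => simp [Matrix.fromBlocks_one]
  | succ k ih =>
    rw [pow_succ, pow_succ, pow_succ, ih, Matrix.fromBlocks_multiply]
    simp

lemma fromBlocks_sum' {r₁ r₂ : ℕ} (f : ℕ → Matrix (Fin r₁) (Fin r₁) ℂ)
    (g : ℕ → Matrix (Fin r₂) (Fin r₂) ℂ) (k : ℕ) :
    ∑ i ∈ Finset.range k, Matrix.fromBlocks (f i) 0 0 (g i)
      = Matrix.fromBlocks (∑ i ∈ Finset.range k, f i) 0 0 (∑ i ∈ Finset.range k, g i) := by
  induction k with
  | zero => simp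
  | succ k ih =>
    rw [Finset.sum_range_succ, Finset.sum_range_succ, Finset.sum_range_succ, ih,
      Matrix.fromBlocks_add]
    simp

lemma diagonal_sum' {r₁ : ℕ} (f : ℕ → Fin r₁ → ℂ) (k : ℕ) :
    ∑ i ∈ Finset.range k, Matrix.diagonal (f i)
      = Matrix.diagonal (fun t => ∑ i ∈ Finset.range k, f i t) := by
  induction k with
  | zero => simp
  | succ k ih =>
    rw [Finset.sum_range_succ, ih, Matrix.diagonal_add]
    congr 1
    funext t
    simp [Finset.sum_range_succ]

lemma dd_norm_one {L : ℕ} (hL : 0 < L) {z : ℂ} (hz : z ^ L = -1) : ‖z‖ = 1 := by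
  have h1 : ‖z‖ ^ L = 1 := by rw [← norm_pow, hz, norm_neg, norm_one]
  by_contra hne
  rcases lt_or_gt_of_ne hne with hlt | hgt
  · have := pow_lt_one₀ (norm_nonneg z) hlt (by omega : L ≠ 0)
    rw [h1] at this; exact lt_irrefl _ this
  · have := one_lt_pow₀ hgt (by omega : L ≠ 0)
    rw [h1] at this; exact lt_irrefl _ this

lemma dd_ne_one {L : ℕ} (hL : 0 < L) {z : ℂ} (hz : z ^ L = -1) : z ≠ 1 := by
  intro h
  rw [h, one_pow] at hz
  norm_num at hz

lemma dsum_bound {r₁ : ℕ} (dd : Fin r₁ → ℂ)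
    (hdd : ∀ i, ∃ L : ℕ, 0 < L ∧ dd i ^ L = -1) :
    ∃ BD : ℝ, 0 ≤ BD ∧ ∀ (t : Fin r₁) (k : ℕ),
      ‖∑ i ∈ Finset.range k, dd t ^ i‖ ≤ BD := by
  refine ⟨∑ t : Fin r₁, 2 / ‖dd t - 1‖,
    Finset.sum_nonneg fun t _ => by positivity, fun t k => ?_⟩
  obtain ⟨L, hL, hLe⟩ := hdd t
  have hne : dd t ≠ 1 := dd_ne_one hL hLe
  have habs : ‖dd t‖ = 1 := dd_norm_one hL hLe
  have hden : (0:ℝ) < ‖dd t - 1‖ := by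
    rw [norm_pos_iff]; exact sub_ne_zero.mpr hne
  have hterm : ‖∑ i ∈ Finset.range k, dd t ^ i‖ ≤ 2 / ‖dd t - 1‖ := by
    rw [geom_sum_eq hne k, norm_div]
    refine div_le_div₀ (by norm_num) ?_ hden le_rfl
    calc ‖dd t ^ k - 1‖ ≤ ‖dd t ^ k‖ + ‖(1:ℂ)‖ := norm_sub_le _ _
    _ = 2 := by rw [norm_pow, habs, one_pow, norm_one]; norm_num
  refine hterm.trans (Finset.single_le_sum (f := fun t => 2 / ‖dd t - 1‖)
    (fun s _ => by positivity) (Finset.mem_univ t))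

lemma part2_psum_bound {r r₁ r₂ : ℕ} (Minf : Matrix (Fin r) (Fin r) ℝ)
    (e : Fin r ≃ (Fin r₁ ⊕ Fin r₂)) (dd : Fin r₁ → ℂ)
    (Nmat : Matrix (Fin r₂) (Fin r₂) ℂ) (X : Matrix (Fin r) (Fin r) ℂ)
    (hX : IsUnit X)
    (hdd : ∀ i, ∃ L : ℕ, 0 < L ∧ dd i ^ L = -1)
    (hN : spectralRadius ℂ Nmat < 1)
    (hsim : X * (Minf.map Complex.ofReal) * X⁻¹ =
      Matrix.reindex e.symm e.symm (Matrix.fromBlocks (Matrix.diagonal dd) 0 0 Nmat)) :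
    ∃ B : ℝ, 0 < B ∧ ∀ (jj : ℕ) (i j : Fin r), |psum Minf jj i j| ≤ B := by
  classical
  obtain ⟨BD, hBD0, hBD⟩ := dsum_bound dd hdd
  obtain ⟨BN, hBN0, hBN⟩ := nsum_bound Nmat hN
  have hdet : IsUnit X.det := (Matrix.isUnit_iff_isUnit_det X).mp hX
  set Mc : Matrix (Fin r) (Fin r) ℂ := Minf.map Complex.ofReal with hMcdef
  set F : Matrix (Fin r₁ ⊕ Fin r₂) (Fin r₁ ⊕ Fin r₂) ℂ :=
    Matrix.fromBlocks (Matrix.diagonal dd) 0 0 Nmat with hFdef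
  set R : Matrix (Fin r) (Fin r) ℂ := Matrix.reindex e.symm e.symm F with hRdef
  have hMcR : Mc = X⁻¹ * R * X := by
    have h1 : X⁻¹ * (X * Mc * X⁻¹) * X = X⁻¹ * R * X := by rw [hsim]
    rw [← h1]
    simp only [← Matrix.mul_assoc]
    rw [Matrix.nonsing_inv_mul X hdet, Matrix.one_mul, Matrix.mul_assoc Mc X⁻¹ X,
      Matrix.nonsing_inv_mul X hdet, Matrix.mul_one]
  have hMcpow : ∀ k : ℕ, Mc ^ k = X⁻¹ * R ^ k * X := by
    intro k
    induction k with
    | zero => rw [pow_zero, pow_zero, Matrix.mul_one, Matrix.nonsing_inv_mul X hdet]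
    | succ k ih =>
      rw [pow_succ, pow_succ, ih, hMcR]
      simp only [← Matrix.mul_assoc]
      rw [Matrix.mul_assoc (X⁻¹ * R ^ k) X X⁻¹, Matrix.mul_nonsing_inv X hdet,
        Matrix.mul_one]
  have hmap : ∀ k : ℕ, (Minf ^ k).map Complex.ofReal = Mc ^ k := by
    intro k
    have h := map_pow (Complex.ofRealHom.mapMatrix) Minf k
    simp only [RingHom.mapMatrix_apply] at h; exact h
  have hRpow : ∀ k : ℕ, R ^ k = Matrix.reindex e.symm e.symm
      (Matrix.fromBlocks (Matrix.diagonal (fun t => dd t ^ k)) 0 0 (Nmat ^ k)) := by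
    intro k
    have h1 : R = Matrix.reindexAlgEquiv ℂ ℂ e.symm F := rfl
    rw [h1, ← map_pow, fromBlocks_pow', Matrix.diagonal_pow]
    rfl
  -- the partial sums
  have hpsum_map : ∀ jj : ℕ, (psum Minf jj).map Complex.ofReal
      = X⁻¹ * (Matrix.reindex e.symm e.symm (Matrix.fromBlocks
          (Matrix.diagonal (fun t => ∑ i ∈ Finset.range (jj+1), dd t ^ i)) 0 0
          (∑ i ∈ Finset.range (jj+1), Nmat ^ i))) * X := by
    intro jj
    have h1 : (psum Minf jj).map Complex.ofReal = ∑ i ∈ Finset.range (jj+1), Mc ^ i := by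
      unfold psum
      ext a b
      simp only [Matrix.map_apply, Matrix.sum_apply]
      push_cast
      refine Finset.sum_congr rfl fun i _ => ?_
      have h := congrArg (fun A => A a b) (hmap i)
      simpa [Matrix.map_apply] using h
    have h2 : ∑ i ∈ Finset.range (jj+1), Mc ^ i
        = X⁻¹ * (∑ i ∈ Finset.range (jj+1), R ^ i) * X := by
      rw [Finset.sum_congr rfl fun i _ => hMcpow i, ← Finset.sum_mul, ← Finset.mul_sum]
    have hRAE : R = Matrix.reindexAlgEquiv ℂ ℂ e.symm F := rfl
    have h3 : ∑ i ∈ Finset.range (jj+1), R ^ i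
        = Matrix.reindexAlgEquiv ℂ ℂ e.symm (∑ i ∈ Finset.range (jj+1), F ^ i) := by
      rw [map_sum (Matrix.reindexAlgEquiv ℂ ℂ e.symm) (fun i => F ^ i) (Finset.range (jj+1))]
      exact Finset.sum_congr rfl fun i _ => by rw [hRAE, ← map_pow]
    have h5 : ∑ i ∈ Finset.range (jj+1), F ^ i
        = Matrix.fromBlocks (Matrix.diagonal (fun t => ∑ i ∈ Finset.range (jj+1), dd t ^ i)) 0 0
            (∑ i ∈ Finset.range (jj+1), Nmat ^ i) := by
      calc ∑ i ∈ Finset.range (jj+1), F ^ i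
          = ∑ i ∈ Finset.range (jj+1),
              Matrix.fromBlocks (Matrix.diagonal (fun t => dd t ^ i)) 0 0 (Nmat ^ i) := by
            refine Finset.sum_congr rfl fun i _ => ?_
            rw [hFdef, fromBlocks_pow', Matrix.diagonal_pow]
            rfl
        _ = _ := by rw [fromBlocks_sum', diagonal_sum']
    rw [h1, h2, h3, h5]
    rfl
  refine ⟨(r:ℝ)^2 * ‖X⁻¹‖ * (BD + BN) * ‖X‖ + 1, by positivity, ?_⟩
  intro jj i j
  have h0 : |psum Minf jj i j| = ‖((psum Minf jj).map Complex.ofReal) i j‖ := by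
    rw [Matrix.map_apply, Complex.norm_real, Real.norm_eq_abs]
  rw [h0, hpsum_map jj]
  set G : Matrix (Fin r) (Fin r) ℂ := Matrix.reindex e.symm e.symm (Matrix.fromBlocks
      (Matrix.diagonal (fun t => ∑ i' ∈ Finset.range (jj+1), dd t ^ i')) 0 0
      (∑ i' ∈ Finset.range (jj+1), Nmat ^ i')) with hGdef
  have hG : ∀ s t : Fin r, ‖G s t‖ ≤ BD + BN := by
    intro s t
    rcases hes : e s with u | u <;> rcases het : e t with v | v <;>
      simp only [hGdef, Matrix.reindex_apply, Matrix.submatrix_apply, Equiv.symm_symm,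
        hes, het, Matrix.fromBlocks_apply₁₁, Matrix.fromBlocks_apply₁₂,
        Matrix.fromBlocks_apply₂₁, Matrix.fromBlocks_apply₂₂]
    · rw [Matrix.diagonal_apply]
      split_ifs with hd
      · exact le_trans (hBD u (jj+1)) (le_add_of_nonneg_right hBN0)
      · rw [norm_zero]; positivity
    · rw [Matrix.zero_apply, norm_zero]; positivity
    · rw [Matrix.zero_apply, norm_zero]; positivity
    · exact le_trans (entry_le_l2_opNorm _ u v)
        (le_trans (hBN (jj+1)) (le_add_of_nonneg_left hBD0))
  have hXe : ∀ (s : Fin r), ‖X⁻¹ i s‖ ≤ ‖X⁻¹‖ := fun s => entry_le_l2_opNorm X⁻¹ i s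
  have hXe2 : ∀ (t : Fin r), ‖X t j‖ ≤ ‖X‖ := fun t => entry_le_l2_opNorm X t j
  have hexp : (X⁻¹ * G * X) i j = ∑ t : Fin r, (∑ s : Fin r, X⁻¹ i s * G s t) * X t j := by
    simp [Matrix.mul_apply]
  rw [hexp]
  have hXn : (0:ℝ) ≤ ‖X‖ := norm_nonneg _
  have hXin : (0:ℝ) ≤ ‖X⁻¹‖ := norm_nonneg _
  have hstep : ∀ t : Fin r, ‖(∑ s : Fin r, X⁻¹ i s * G s t) * X t j‖
      ≤ ((r:ℝ) * (‖X⁻¹‖ * (BD + BN))) * ‖X‖ := by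
    intro t
    rw [norm_mul]
    refine mul_le_mul ?_ (hXe2 t) (norm_nonneg _) (by positivity)
    calc ‖∑ s : Fin r, X⁻¹ i s * G s t‖ ≤ ∑ s : Fin r, ‖X⁻¹ i s * G s t‖ := norm_sum_le _ _
    _ ≤ ∑ _s : Fin r, ‖X⁻¹‖ * (BD + BN) := by
        refine Finset.sum_le_sum fun s _ => ?_
        rw [norm_mul]
        exact mul_le_mul (hXe s) (hG s t) (norm_nonneg _) hXin
    _ = (r:ℝ) * (‖X⁻¹‖ * (BD + BN)) := by simp [mul_comm]
  calc ‖∑ t : Fin r, (∑ s : Fin r, X⁻¹ i s * G s t) * X t j‖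
      ≤ ∑ t : Fin r, ‖(∑ s : Fin r, X⁻¹ i s * G s t) * X t j‖ := norm_sum_le _ _
    _ ≤ ∑ _t : Fin r, ((r:ℝ) * (‖X⁻¹‖ * (BD + BN))) * ‖X‖ :=
        Finset.sum_le_sum fun t _ => hstep t
    _ = (r:ℝ)^2 * ‖X⁻¹‖ * (BD + BN) * ‖X‖ := by
        simp [Finset.sum_const, Finset.card_univ]; ring
    _ ≤ (r:ℝ)^2 * ‖X⁻¹‖ * (BD + BN) * ‖X‖ + 1 := by linarith
end Part2

lemma part2 (r q p : ℕ) (hq : 1 ≤ q) (hpq : p = q ∨ p = q + 1)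
    (C T : ℝ) (hC : 0 < C) (hT : 0 < T)
    (Minf : Matrix (Fin r) (Fin r) ℝ)
    (hpow : ∀ k : ℕ, ‖Minf ^ k‖ ≤ C)
    (B : ℝ) (hB : 0 < B)
    (hpsumB : ∀ (jj : ℕ) (i j : Fin r), |psum Minf jj i j| ≤ B) :
    ∃ K > (0 : ℝ), ∀ (m : ℕ), ∀ h ∈ Set.Ioc (0 : ℝ) 1,
      ∀ Δz δ : ℕ → EuclideanSpace ℝ (Fin r × Fin m),
        (∀ n, 1 ≤ n → Δz n = kronLin Minf (1 : Matrix (Fin m) (Fin m) ℝ) (Δz (n - 1)) + δ n) →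
        ‖Δz 0‖ ≤ C * h ^ p →
        (∀ n, 1 ≤ n → ‖δ n‖ ≤ C * h ^ (q + 1)) →
        (∀ n, 2 ≤ n → ‖δ n - δ (n - 1)‖ ≤ C * h ^ (q + 2)) →
        ∀ n : ℕ, (n : ℝ) * h ≤ T → ‖Δz n‖ ≤ K * h ^ (min p (q + 1)) := by
  refine ⟨C + r * C^2 + r * B * C * (1 + T) + 1, by positivity, ?_⟩
  intro m h hh Δz δ hrec h0 hδ hδδ n hnT
  obtain ⟨hh0, hh1⟩ := hh
  set mn := min p (q + 1) with hmn
  have hmnp : mn ≤ p := min_le_left _ _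
  have hmnq : mn ≤ q + 1 := min_le_right _ _
  have hhmn : (0:ℝ) < h ^ mn := pow_pos hh0 mn
  have hhp : h ^ p ≤ h ^ mn := pow_le_pow_of_le_one hh0.le hh1 hmnp
  have hhq1 : h ^ (q+1) ≤ h ^ mn := pow_le_pow_of_le_one hh0.le hh1 hmnq
  have hrC : (0:ℝ) ≤ r * C := by positivity
  rcases Nat.eq_zero_or_pos n with rfl | hn
  · calc ‖Δz 0‖ ≤ C * h ^ p := h0
    _ ≤ C * h ^ mn := mul_le_mul_of_nonneg_left hhp hC.le
    _ ≤ (C + r * C^2 + r * B * C * (1 + T) + 1) * h ^ mn := by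
        nlinarith [mul_nonneg (by positivity : (0:ℝ) ≤ ↑r * C^2 + ↑r * B * C * (1+T) + 1) hhmn.le]
  · have hnh0 : (0:ℝ) ≤ (n:ℝ) * h := by positivity
    have hmain := norm_Δz_le Minf Δz δ hrec n hn C B
      (fun i j => entries_pow_le Minf C hpow n i j)
      (fun jj _ i j => hpsumB jj i j)
    have e1 : (r:ℝ) * C * ‖Δz 0‖ ≤ r * C^2 * h ^ mn := by
      calc (r:ℝ) * C * ‖Δz 0‖ ≤ r * C * (C * h ^ p) := mul_le_mul_of_nonneg_left h0 hrC
      _ = r * C^2 * h ^ p := by ring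
      _ ≤ r * C^2 * h ^ mn := mul_le_mul_of_nonneg_left hhp (by positivity)
    have e2 : (r:ℝ) * B * ‖δ 1‖ ≤ r * B * C * h ^ mn := by
      calc (r:ℝ) * B * ‖δ 1‖ ≤ r * B * (C * h ^ (q+1)) :=
            mul_le_mul_of_nonneg_left (hδ 1 le_rfl) (by positivity)
      _ = r * B * C * h ^ (q+1) := by ring
      _ ≤ r * B * C * h ^ mn := mul_le_mul_of_nonneg_left hhq1 (by positivity)
    have e3 : ∑ i ∈ Finset.range (n - 1), (r:ℝ) * B * ‖δ (i+2) - δ (i+1)‖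
        ≤ r * B * C * T * h ^ mn := by
      calc ∑ i ∈ Finset.range (n - 1), (r:ℝ) * B * ‖δ (i+2) - δ (i+1)‖
          ≤ ∑ _i ∈ Finset.range (n - 1), (r:ℝ) * B * (C * h ^ (q+2)) := by
            refine Finset.sum_le_sum fun i _ => ?_
            refine mul_le_mul_of_nonneg_left ?_ (by positivity)
            have := hδδ (i+2) (by omega)
            simpa using this
        _ = ((n-1 : ℕ) : ℝ) * ((r:ℝ) * B * (C * h ^ (q+2))) := by
            simp [mul_comm]
        _ ≤ (n : ℝ) * ((r:ℝ) * B * (C * h ^ (q+2))) := by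
            refine mul_le_mul_of_nonneg_right ?_ (by positivity)
            exact_mod_cast Nat.sub_le n 1
        _ = (r * B * C * h ^ (q+1)) * ((n:ℝ) * h) := by
            rw [show q + 2 = q + 1 + 1 from rfl, pow_succ]; ring
        _ ≤ (r * B * C * h ^ (q+1)) * T := mul_le_mul_of_nonneg_left hnT (by positivity)
        _ ≤ (r * B * C * h ^ mn) * T := by
            refine mul_le_mul_of_nonneg_right ?_ hT.le
            exact mul_le_mul_of_nonneg_left hhq1 (by positivity)
        _ = r * B * C * T * h ^ mn := by ring
    calc ‖Δz n‖ ≤ _ := hmain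
    _ ≤ r * C^2 * h ^ mn + r * B * C * h ^ mn + r * B * C * T * h ^ mn :=
        add_le_add (add_le_add e1 e2) e3
    _ ≤ (C + r * C^2 + r * B * C * (1 + T) + 1) * h ^ mn := by
        nlinarith [mul_nonneg (by positivity : (0:ℝ) ≤ C + 1) hhmn.le]


/-- **Error propagation for the algebraic variables of IMEX GLMs on index-1 DAEs.**
For the recurrence `Δz_n = (M_∞ ⊗ I_m) Δz_{n−1} + δ_n` with `‖Δz_0‖ ≤ C h^p`,
`‖δ_n‖ ≤ C h^{q+1}` and `‖δ_n − δ_{n−1}‖ ≤ C h^{q+2}`: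
(1) if the powers of `M_∞` are bounded by `C` then `‖Δz_n‖ ≤ K h^q` for `n h ≤ T`;
(2) if moreover `M_∞` is similar (via an invertible `X`) to a block diagonal matrix with a
diagonal block whose entries are roots of `−1` and another block of spectral radius `< 1`,
then `‖Δz_n‖ ≤ K h^{min(p, q+1)}` for `n h ≤ T`. -/
theorem imex_glm_index1_error_propagation
    (r q p : ℕ) (hq : 1 ≤ q) (hpq : p = q ∨ p = q + 1)
    (C T : ℝ) (hC : 0 < C) (hT : 0 < T)
    (Minf : Matrix (Fin r) (Fin r) ℝ) :
    -- (1) power-bounded case: order `q`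
    ((∀ k : ℕ, ‖Minf ^ k‖ ≤ C) →
      ∃ K > (0 : ℝ), ∀ (m : ℕ), ∀ h ∈ Set.Ioc (0 : ℝ) 1,
        ∀ Δz δ : ℕ → EuclideanSpace ℝ (Fin r × Fin m),
          (∀ n, 1 ≤ n → Δz n = kronLin Minf (1 : Matrix (Fin m) (Fin m) ℝ) (Δz (n - 1)) + δ n) →
          ‖Δz 0‖ ≤ C * h ^ p →
          (∀ n, 1 ≤ n → ‖δ n‖ ≤ C * h ^ (q + 1)) →
          (∀ n, 2 ≤ n → ‖δ n - δ (n - 1)‖ ≤ C * h ^ (q + 2)) →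
          ∀ n : ℕ, (n : ℝ) * h ≤ T → ‖Δz n‖ ≤ K * h ^ q) ∧
    -- (2) roots-of-(−1) plus strictly contractive part: order `min(p, q+1)`
    ((∀ k : ℕ, ‖Minf ^ k‖ ≤ C) →
      ∀ (r₁ r₂ : ℕ) (e : Fin r ≃ (Fin r₁ ⊕ Fin r₂)) (dd : Fin r₁ → ℂ)
        (Nmat : Matrix (Fin r₂) (Fin r₂) ℂ) (X : Matrix (Fin r) (Fin r) ℂ),
        IsUnit X →
        (∀ i, ∃ L : ℕ, 0 < L ∧ dd i ^ L = -1) →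
        spectralRadius ℂ Nmat < 1 →
        X * (Minf.map Complex.ofReal) * X⁻¹ =
          Matrix.reindex e.symm e.symm (Matrix.fromBlocks (Matrix.diagonal dd) 0 0 Nmat) →
        ∃ K > (0 : ℝ), ∀ (m : ℕ), ∀ h ∈ Set.Ioc (0 : ℝ) 1,
          ∀ Δz δ : ℕ → EuclideanSpace ℝ (Fin r × Fin m),
            (∀ n, 1 ≤ n → Δz n = kronLin Minf (1 : Matrix (Fin m) (Fin m) ℝ) (Δz (n - 1)) + δ n) →
            ‖Δz 0‖ ≤ C * h ^ p →
            (∀ n, 1 ≤ n → ‖δ n‖ ≤ C * h ^ (q + 1)) →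
            (∀ n, 2 ≤ n → ‖δ n - δ (n - 1)‖ ≤ C * h ^ (q + 2)) →
            ∀ n : ℕ, (n : ℝ) * h ≤ T → ‖Δz n‖ ≤ K * h ^ (min p (q + 1))) := by
  
  constructor
  · intro hpow
    exact part1 r q p hq hpq C T hC hT Minf hpow
  · intro hpow r₁ r₂ e dd Nmat X hX hdd hN hsim
    obtain ⟨B, hB, hpsumB⟩ := part2_psum_bound Minf e dd Nmat X hX hdd hN hsim
    exact part2 r q p hq hpq C T hC hT Minf hpow B hB hpsumB
end

section
/- Let A ∈ ℂ^{s×s}, B ∈ ℂ^{r×s}, U ∈ ℂ^{s×r}, V ∈ ℂ^{r×r}, and let G ∈ ℂ^{m×m} be diagonalizable: G = P·Λ·P⁻¹ with P invertible and Λ diagonal with diagonal entries λ_1, …, λ_m. Assume that for every i the matrix I_s − λ_i·A is invertible. Then I_{sm} − A ⊗ G is invertible, and the spectrum of the matrix M(G) := V ⊗ I_m + (B ⊗ G)·(I_{sm} − A ⊗ G)⁻¹·(U ⊗ I_m) is contained in the union over i = 1, …, m of the spectra of M(λ_i) := V + λ_i·B·(I_s − λ_i·A)⁻¹·U. In particular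 the spectral radius satisfies ρ(M(G)) ≤ max_{1 ≤ i ≤ m} ρ(M(λ_i)). -/
open scoped Kronecker

-- Kronecker with a diagonal matrix is block diagonal
lemma kron_diag_eq_blockDiagonal {p q m : ℕ} (A : Matrix (Fin p) (Fin q) ℂ) (d : Fin m → ℂ) :
    A ⊗ₖ Matrix.diagonal d = Matrix.blockDiagonal (fun j => d j • A) := by
  ext ⟨i, j⟩ ⟨k, l⟩
  simp only [Matrix.kroneckerMap_apply, Matrix.blockDiagonal_apply, Matrix.diagonal_apply,
    Matrix.smul_apply, smul_eq_mul]
  split <;> simp [mul_comm]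

lemma kron_one_eq_blockDiagonal {p q m : ℕ} (A : Matrix (Fin p) (Fin q) ℂ) :
    A ⊗ₖ (1 : Matrix (Fin m) (Fin m) ℂ) = Matrix.blockDiagonal (fun _ => A) := by
  have := kron_diag_eq_blockDiagonal A (fun _ : Fin m => (1 : ℂ))
  simpa [Matrix.diagonal_one] using this

lemma spectrum_blockDiagonal_subset {p m : ℕ} (f : Fin m → Matrix (Fin p) (Fin p) ℂ) :
    spectrum ℂ (Matrix.blockDiagonal f) ⊆ ⋃ i : Fin m, spectrum ℂ (f i) := by
  intro z hz
  rw [spectrum.mem_iff] at hz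
  by_contra hcon
  simp only [Set.mem_iUnion, not_exists, spectrum.mem_iff, not_not] at hcon
  apply hz
  have key : (algebraMap ℂ (Matrix (Fin p × Fin m) (Fin p × Fin m) ℂ)) z
      - Matrix.blockDiagonal f
      = Matrix.blockDiagonal (fun j => (algebraMap ℂ (Matrix (Fin p) (Fin p) ℂ)) z - f j) := by
    simp only [Algebra.algebraMap_eq_smul_one]
    rw [← Matrix.blockDiagonal_one, ← Matrix.blockDiagonal_smul, ← Matrix.blockDiagonal_sub]
    rfl
  rw [key, Matrix.isUnit_iff_isUnit_det, Matrix.det_blockDiagonal, isUnit_iff_ne_zero,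
    Finset.prod_ne_zero_iff]
  intro j _
  rw [← isUnit_iff_ne_zero, ← Matrix.isUnit_iff_isUnit_det]
  exact hcon j

/-- **Spectral mapping for the GLM stability matrix at a matrix argument.**
If `G = P Λ P⁻¹` is diagonalizable with eigenvalues `λ_1, …, λ_m` and each `I_s − λ_i A` is
invertible, then `I_{sm} − A ⊗ G` is invertible, the spectrum of
`M(G) = V ⊗ I_m + (B ⊗ G)(I_{sm} − A ⊗ G)⁻¹(U ⊗ I_m)` is contained in the union of the spectra
of the matrices `M(λ_i) = V + λ_i B (I_s − λ_i A)⁻¹ U`, and consequently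
`ρ(M(G)) ≤ max_i ρ(M(λ_i))`. -/
theorem glm_stability_matrix_spectrum_kronecker
    {s r m : ℕ}
    (A : Matrix (Fin s) (Fin s) ℂ) (B : Matrix (Fin r) (Fin s) ℂ)
    (U : Matrix (Fin s) (Fin r) ℂ) (V : Matrix (Fin r) (Fin r) ℂ)
    (G P : Matrix (Fin m) (Fin m) ℂ) (hP : IsUnit P) (lam : Fin m → ℂ)
    (hG : G = P * Matrix.diagonal lam * P⁻¹)
    (hA : ∀ i, IsUnit ((1 : Matrix (Fin s) (Fin s) ℂ) - lam i • A)) :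
    IsUnit ((1 : Matrix (Fin s × Fin m) (Fin s × Fin m) ℂ) - A ⊗ₖ G) ∧
    spectrum ℂ
        (V ⊗ₖ (1 : Matrix (Fin m) (Fin m) ℂ)
          + (B ⊗ₖ G) * ((1 : Matrix (Fin s × Fin m) (Fin s × Fin m) ℂ) - A ⊗ₖ G)⁻¹
            * (U ⊗ₖ (1 : Matrix (Fin m) (Fin m) ℂ)))
      ⊆ ⋃ i : Fin m,
          spectrum ℂ
            (V + lam i • (B * ((1 : Matrix (Fin s) (Fin s) ℂ) - lam i • A)⁻¹ * U)) ∧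
    spectralRadius ℂ
        (V ⊗ₖ (1 : Matrix (Fin m) (Fin m) ℂ)
          + (B ⊗ₖ G) * ((1 : Matrix (Fin s × Fin m) (Fin s × Fin m) ℂ) - A ⊗ₖ G)⁻¹
            * (U ⊗ₖ (1 : Matrix (Fin m) (Fin m) ℂ)))
      ≤ ⨆ i : Fin m,
          spectralRadius ℂ
            (V + lam i • (B * ((1 : Matrix (Fin s) (Fin s) ℂ) - lam i • A)⁻¹ * U)) := by
  have hPd : IsUnit P.det := (Matrix.isUnit_iff_isUnit_det P).mp hP
  have hPP : P * P⁻¹ = 1 := Matrix.mul_nonsing_inv P hPd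
  have hPPi : P⁻¹ * P = 1 := Matrix.nonsing_inv_mul P hPd
  set Λ := Matrix.diagonal lam with hΛ
  -- generic conjugation identity
  have conj : ∀ {p q : ℕ} (C : Matrix (Fin p) (Fin q) ℂ),
      C ⊗ₖ G = ((1 : Matrix (Fin p) (Fin p) ℂ) ⊗ₖ P) * (C ⊗ₖ Λ)
        * ((1 : Matrix (Fin q) (Fin q) ℂ) ⊗ₖ P⁻¹) := by
    intro p q C
    rw [← Matrix.mul_kronecker_mul, ← Matrix.mul_kronecker_mul]
    simp [hG]
  have kmul1 : ∀ {p : ℕ},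
      ((1 : Matrix (Fin p) (Fin p) ℂ) ⊗ₖ P) * ((1 : Matrix (Fin p) (Fin p) ℂ) ⊗ₖ P⁻¹) = 1 := by
    intro p
    rw [← Matrix.mul_kronecker_mul, hPP]
    simp [Matrix.one_kronecker_one]
  have kmul2 : ∀ {p : ℕ},
      ((1 : Matrix (Fin p) (Fin p) ℂ) ⊗ₖ P⁻¹) * ((1 : Matrix (Fin p) (Fin p) ℂ) ⊗ₖ P) = 1 := by
    intro p
    rw [← Matrix.mul_kronecker_mul, hPPi]
    simp [Matrix.one_kronecker_one]
  have kunit : ∀ {p : ℕ}, IsUnit ((1 : Matrix (Fin p) (Fin p) ℂ) ⊗ₖ P) := by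
    intro p
    rw [Matrix.isUnit_iff_isUnit_det]
    refine IsUnit.of_mul_eq_one (((1 : Matrix (Fin p) (Fin p) ℂ) ⊗ₖ P⁻¹).det) ?_
    rw [← Matrix.det_mul, kmul1, Matrix.det_one]
  have kunit' : ∀ {p : ℕ}, IsUnit ((1 : Matrix (Fin p) (Fin p) ℂ) ⊗ₖ P⁻¹) := by
    intro p
    rw [Matrix.isUnit_iff_isUnit_det]
    refine IsUnit.of_mul_eq_one (((1 : Matrix (Fin p) (Fin p) ℂ) ⊗ₖ P).det) ?_
    rw [← Matrix.det_mul, kmul2, Matrix.det_one]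
  -- block diagonal structure
  have hE : (1 : Matrix (Fin s × Fin m) (Fin s × Fin m) ℂ) - A ⊗ₖ Λ
      = Matrix.blockDiagonal (fun j => (1 : Matrix (Fin s) (Fin s) ℂ) - lam j • A) := by
    rw [kron_diag_eq_blockDiagonal, ← Matrix.blockDiagonal_one, ← Matrix.blockDiagonal_sub]
    rfl
  have hEunit : IsUnit ((1 : Matrix (Fin s × Fin m) (Fin s × Fin m) ℂ) - A ⊗ₖ Λ) := by
    rw [hE, Matrix.isUnit_iff_isUnit_det, Matrix.det_blockDiagonal, isUnit_iff_ne_zero,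
      Finset.prod_ne_zero_iff]
    intro j _
    rw [← isUnit_iff_ne_zero, ← Matrix.isUnit_iff_isUnit_det]
    exact hA j
  have hEinv : ((1 : Matrix (Fin s × Fin m) (Fin s × Fin m) ℂ) - A ⊗ₖ Λ)⁻¹
      = Matrix.blockDiagonal (fun j => ((1 : Matrix (Fin s) (Fin s) ℂ) - lam j • A)⁻¹) := by
    apply Matrix.inv_eq_right_inv
    rw [hE, ← Matrix.blockDiagonal_mul, ← Matrix.blockDiagonal_one]
    exact congrArg _ (funext fun j =>
      Matrix.mul_nonsing_inv _ ((Matrix.isUnit_iff_isUnit_det _).mp (hA j)))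
  have hIAG : (1 : Matrix (Fin s × Fin m) (Fin s × Fin m) ℂ) - A ⊗ₖ G
      = ((1 : Matrix (Fin s) (Fin s) ℂ) ⊗ₖ P)
        * ((1 : Matrix (Fin s × Fin m) (Fin s × Fin m) ℂ) - A ⊗ₖ Λ)
        * ((1 : Matrix (Fin s) (Fin s) ℂ) ⊗ₖ P⁻¹) := by
    rw [conj A, Matrix.mul_sub, Matrix.sub_mul, Matrix.mul_one, kmul1]
  have hUnitBig : IsUnit ((1 : Matrix (Fin s × Fin m) (Fin s × Fin m) ℂ) - A ⊗ₖ G) := by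
    rw [hIAG]
    exact (kunit.mul hEunit).mul kunit'
  have hinv : ((1 : Matrix (Fin s × Fin m) (Fin s × Fin m) ℂ) - A ⊗ₖ G)⁻¹
      = ((1 : Matrix (Fin s) (Fin s) ℂ) ⊗ₖ P)
        * ((1 : Matrix (Fin s × Fin m) (Fin s × Fin m) ℂ) - A ⊗ₖ Λ)⁻¹
        * ((1 : Matrix (Fin s) (Fin s) ℂ) ⊗ₖ P⁻¹) := by
    rw [hIAG, Matrix.mul_inv_rev, Matrix.mul_inv_rev,
      Matrix.inv_eq_right_inv kmul2, Matrix.inv_eq_right_inv kmul1, Matrix.mul_assoc]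
  -- cancellation helper
  have c1 : ∀ {p : ℕ} {n : Type} (X : Matrix (Fin p × Fin m) n ℂ),
      ((1 : Matrix (Fin p) (Fin p) ℂ) ⊗ₖ P⁻¹) * (((1 : Matrix (Fin p) (Fin p) ℂ) ⊗ₖ P) * X)
        = X := by
    intro p n X
    rw [← Matrix.mul_assoc, kmul2, Matrix.one_mul]
  -- conjugation identities for the rectangular factors
  have hU1 : U ⊗ₖ (1 : Matrix (Fin m) (Fin m) ℂ)
      = ((1 : Matrix (Fin s) (Fin s) ℂ) ⊗ₖ P)
        * (U ⊗ₖ (1 : Matrix (Fin m) (Fin m) ℂ))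
        * ((1 : Matrix (Fin r) (Fin r) ℂ) ⊗ₖ P⁻¹) := by
    rw [← Matrix.mul_kronecker_mul, ← Matrix.mul_kronecker_mul]
    simp [hPP]
  have hV1 : V ⊗ₖ (1 : Matrix (Fin m) (Fin m) ℂ)
      = ((1 : Matrix (Fin r) (Fin r) ℂ) ⊗ₖ P)
        * (V ⊗ₖ (1 : Matrix (Fin m) (Fin m) ℂ))
        * ((1 : Matrix (Fin r) (Fin r) ℂ) ⊗ₖ P⁻¹) := by
    rw [← Matrix.mul_kronecker_mul, ← Matrix.mul_kronecker_mul]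
    simp [hPP]
  set Minner := V ⊗ₖ (1 : Matrix (Fin m) (Fin m) ℂ)
      + (B ⊗ₖ Λ) * ((1 : Matrix (Fin s × Fin m) (Fin s × Fin m) ℂ) - A ⊗ₖ Λ)⁻¹
        * (U ⊗ₖ (1 : Matrix (Fin m) (Fin m) ℂ)) with hMinnerDef
  have hM : V ⊗ₖ (1 : Matrix (Fin m) (Fin m) ℂ)
        + (B ⊗ₖ G) * ((1 : Matrix (Fin s × Fin m) (Fin s × Fin m) ℂ) - A ⊗ₖ G)⁻¹
          * (U ⊗ₖ (1 : Matrix (Fin m) (Fin m) ℂ))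
      = ((1 : Matrix (Fin r) (Fin r) ℂ) ⊗ₖ P) * Minner
        * ((1 : Matrix (Fin r) (Fin r) ℂ) ⊗ₖ P⁻¹) := by
    nth_rewrite 1 [hV1]
    nth_rewrite 1 [hU1]
    rw [conj B, hinv, hMinnerDef]
    simp only [Matrix.mul_add, Matrix.add_mul, Matrix.mul_assoc, c1]
  have hMblocks : Minner
      = Matrix.blockDiagonal (fun j =>
          V + lam j • (B * ((1 : Matrix (Fin s) (Fin s) ℂ) - lam j • A)⁻¹ * U)) := by
    rw [hMinnerDef, kron_one_eq_blockDiagonal V, kron_diag_eq_blockDiagonal B, hEinv,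
      kron_one_eq_blockDiagonal U, ← Matrix.blockDiagonal_mul, ← Matrix.blockDiagonal_mul]
    ext ⟨i, j⟩ ⟨k, l⟩
    by_cases h : j = l <;>
      simp [Matrix.blockDiagonal_apply, h, smul_mul_assoc, Matrix.mul_assoc]
  -- the conjugating unit
  let u : (Matrix (Fin r × Fin m) (Fin r × Fin m) ℂ)ˣ :=
    ⟨(1 : Matrix (Fin r) (Fin r) ℂ) ⊗ₖ P, (1 : Matrix (Fin r) (Fin r) ℂ) ⊗ₖ P⁻¹, kmul1, kmul2⟩
  have hspec : spectrum ℂ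
      (V ⊗ₖ (1 : Matrix (Fin m) (Fin m) ℂ)
        + (B ⊗ₖ G) * ((1 : Matrix (Fin s × Fin m) (Fin s × Fin m) ℂ) - A ⊗ₖ G)⁻¹
          * (U ⊗ₖ (1 : Matrix (Fin m) (Fin m) ℂ)))
      ⊆ ⋃ i : Fin m, spectrum ℂ
          (V + lam i • (B * ((1 : Matrix (Fin s) (Fin s) ℂ) - lam i • A)⁻¹ * U)) := by
    rw [hM, show ((1 : Matrix (Fin r) (Fin r) ℂ) ⊗ₖ P) * Minner
        * ((1 : Matrix (Fin r) (Fin r) ℂ) ⊗ₖ P⁻¹) = ↑u * Minner * ↑u⁻¹ from rfl,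
      spectrum.units_conjugate, hMblocks]
    exact spectrum_blockDiagonal_subset _
  refine ⟨hUnitBig, hspec, ?_⟩
  rw [spectralRadius]
  refine iSup₂_le fun z hz => ?_
  obtain ⟨i, hi⟩ := Set.mem_iUnion.mp (hspec hz)
  refine le_trans ?_ (le_iSup _ i)
  exact le_iSup₂ (f := fun k (_ : k ∈ spectrum ℂ
    (V + lam i • (B * ((1 : Matrix (Fin s) (Fin s) ℂ) - lam i • A)⁻¹ * U))) => (‖k‖₊ : ENNReal)) z hi
end
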